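/- arXiv:2111.14614 — 11 statements merged into one kernel-verified Lean document; each statement's English description precedes it below -/
import Mathlib

section
/- Let Y be a complex Banach space, let n ∈ ℕ, let ν : ℝⁿ → (0,∞) be a function such that 1/ν is locally bounded, let 𝒫 be the metric space associated with C_{0,ν}(ℝⁿ : Y), and let F : ℝⁿ → Y be continuous. If F is Bohr 𝒫-almost periodic, then F is bounded and Levitan N-almost periodic. -/
noncomputable section

open Filter

/-- The space `C_{0,ν}(ℝⁿ : Y)` of continuous functions `u` with
`‖u(t)‖ ν(t) → 0` as `|t| → ∞`. -/
def C0nu {n : ℕ} {Y : Type*} [NormedAddCommGroup Y]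
    (ν : EuclideanSpace ℝ (Fin n) → ℝ) : Set (EuclideanSpace ℝ (Fin n) → Y) :=
  {u | Continuous u ∧
    Filter.Tendsto (fun t => ‖u t‖ * ν t)
      (Filter.comap (fun t : EuclideanSpace ℝ (Fin n) => ‖t‖) Filter.atTop) (nhds 0)}

/-- Bohr `𝒫`-almost periodicity, where `𝒫` is the metric space associated with
`C_{0,ν}(ℝⁿ : Y)` (so that `‖f‖_P = sup_t ‖f(t)‖ ν(t)`). -/
def BohrC0nuAP {n : ℕ} {Y : Type*} [NormedAddCommGroup Y]
    (ν : EuclideanSpace ℝ (Fin n) → ℝ) (F : EuclideanSpace ℝ (Fin n) → Y) : Prop :=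
  ∀ ε : ℝ, 0 < ε → ∃ l : ℝ, 0 < l ∧ ∀ t₀ : EuclideanSpace ℝ (Fin n),
    ∃ τ : EuclideanSpace ℝ (Fin n), ‖τ - t₀‖ ≤ l ∧
      (fun t => F (t + τ) - F t) ∈ C0nu ν ∧
      ∀ t, ‖F (t + τ) - F t‖ * ν t ≤ ε

/-- If `F : ℝⁿ → Y` is continuous and Bohr `𝒫`-almost periodic, where `𝒫` is associated with
`C_{0,ν}(ℝⁿ : Y)` and `1/ν` is locally bounded, then `F` is bounded and Levitan
`N`-almost periodic. -/
theorem stmt0 {n : ℕ} {Y : Type*} [NormedAddCommGroup Y] [NormedSpace ℂ Y] [CompleteSpace Y]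
    (ν : EuclideanSpace ℝ (Fin n) → ℝ) (hν : ∀ t, 0 < ν t)
    (hloc : ∀ r : ℝ, 0 < r → ∃ M : ℝ, ∀ t : EuclideanSpace ℝ (Fin n), ‖t‖ ≤ r → 1 / ν t ≤ M)
    (F : EuclideanSpace ℝ (Fin n) → Y) (hF : Continuous F)
    (hAP : BohrC0nuAP ν F) :
    (∃ M : ℝ, ∀ t, ‖F t‖ ≤ M) ∧
      (∀ ε : ℝ, 0 < ε → ∀ N : ℝ, 0 < N → ∃ l : ℝ, 0 < l ∧
        ∀ t₀ : EuclideanSpace ℝ (Fin n), ∃ τ : EuclideanSpace ℝ (Fin n), ‖τ - t₀‖ ≤ l ∧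
          ∀ t : EuclideanSpace ℝ (Fin n), ‖t‖ ≤ N → ‖F (t + τ) - F t‖ ≤ ε) := by
  constructor
  · -- boundedness
    obtain ⟨l, hl, h⟩ := hAP 1 one_pos
    obtain ⟨M₁, hM₁⟩ := hloc l hl
    obtain ⟨C, hC⟩ := (isCompact_closedBall (0 : EuclideanSpace ℝ (Fin n)) l).exists_bound_of_continuousOn hF.continuousOn
    refine ⟨C + M₁, fun s => ?_⟩
    obtain ⟨τ, hτ, _, hle⟩ := h s
    have hsn : ‖s - τ‖ ≤ l := by rw [norm_sub_rev]; exact hτ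
    have h1 : ‖F ((s - τ) + τ) - F (s - τ)‖ ≤ 1 / ν (s - τ) := by
      rw [le_div_iff₀ (hν (s - τ))]
      exact hle (s - τ)
    have h2 : 1 / ν (s - τ) ≤ M₁ := hM₁ _ hsn
    have h3 : ‖F (s - τ)‖ ≤ C := hC _ (by simpa [Metric.mem_closedBall, dist_eq_norm] using hsn)
    calc ‖F s‖ = ‖F (s - τ) + (F ((s - τ) + τ) - F (s - τ))‖ := by
          have h4 : s - τ + τ = s := sub_add_cancel _ _
          rw [h4, add_sub_cancel]
      _ ≤ ‖F (s - τ)‖ + ‖F ((s - τ) + τ) - F (s - τ)‖ := norm_add_le _ _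
      _ ≤ C + M₁ := add_le_add h3 (h1.trans h2)
  · intro ε hε N hN
    obtain ⟨M₁, hM₁⟩ := hloc N hN
    set M : ℝ := max M₁ 1 with hM
    have hMpos : 0 < M := lt_of_lt_of_le one_pos (le_max_right _ _)
    obtain ⟨l, hl, h⟩ := hAP (ε / M) (div_pos hε hMpos)
    refine ⟨l, hl, fun t₀ => ?_⟩
    obtain ⟨τ, hτ, _, hle⟩ := h t₀
    refine ⟨τ, hτ, fun t ht => ?_⟩
    have h1 : ‖F (t + τ) - F t‖ ≤ (ε / M) * (1 / ν t) := by
      rw [mul_one_div, le_div_iff₀ (hν t)]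
      exact hle t
    have h2 : 1 / ν t ≤ M := (hM₁ t ht).trans (le_max_left _ _)
    calc ‖F (t + τ) - F t‖ ≤ (ε / M) * (1 / ν t) := h1
      _ ≤ (ε / M) * M := mul_le_mul_of_nonneg_left h2 (le_of_lt (div_pos hε hMpos))
      _ = ε := div_mul_cancel₀ ε hMpos.ne'
end
end

section
/- Let X and Y be complex Banach spaces, let (R(t))_{t∈(0,∞)ⁿ} ⊆ L(X,Y) be a strongly continuous operator family, let ν : ℝⁿ → (0,∞) satisfy ν(t) ≥ c for all t ∈ ℝⁿ and some constant c > 0, let w : ℝⁿ → (0,∞) satisfy ν(x+y) ≤ ν(x)w(y) for all x ∈ ℝⁿ and y ∈ [0,∞)ⁿ, and assume ∫_{(0,∞)ⁿ} (1+w(t))‖R(t)‖ dt < ∞. Let R be a nonempty collection of sequences in ℝⁿ, and let 𝒫_X and 𝒫_Y be the metric spaces associated with C_{0,ν}(ℝⁿ : X) and C_{0,ν}(ℝⁿ : Y) respectively. If f : ℝⁿ → X is bounded, continuous and (R,𝒫_X)-multi-almost periodic, then the function F : ℝⁿ → Y given by F(t) := ∫_{-∞}^{t₁} ⋯ ∫_{-∞}^{t_n}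 R(t−s) f(s) ds = ∫_{[0,∞)ⁿ} R(s) f(t−s) ds is bounded, continuous and (R,𝒫_Y)-multi-almost periodic. -/
noncomputable section

open Filter MeasureTheory

/-- `(R,𝒫)`-multi-almost periodicity of `f : ℝⁿ → Z`, where `𝒫` is the metric space
associated with `C_{0,ν}(ℝⁿ : Z)` (so that `‖g‖_P = sup_t ‖g(t)‖ ν(t)`): for every
sequence `b ∈ R` there are a subsequence `(b_{k_l})` and a limit function `g` with
`f(·+b_{k_l}) − g ∈ P` for all `l` and `lim_{l→∞} ‖f(·+b_{k_l}) − g‖_P = 0`. -/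
def RC0nuAP {n : ℕ} {Z : Type*} [NormedAddCommGroup Z]
    (R : Set (ℕ → EuclideanSpace ℝ (Fin n))) (ν : EuclideanSpace ℝ (Fin n) → ℝ)
    (f : EuclideanSpace ℝ (Fin n) → Z) : Prop :=
  ∀ b ∈ R, ∃ k : ℕ → ℕ, StrictMono k ∧ ∃ g : EuclideanSpace ℝ (Fin n) → Z,
    (∀ l : ℕ, (fun t => f (t + b (k l)) - g t) ∈ C0nu ν) ∧
    (∀ ε : ℝ, 0 < ε → ∃ N : ℕ, ∀ l ≥ N, ∀ t, ‖f (t + b (k l)) - g t‖ * ν t ≤ ε)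

section Stmt2Aux
open Set

variable {n : ℕ}

set_option linter.unusedSectionVars false

lemma measurableSet_cone' : MeasurableSet {s : EuclideanSpace ℝ (Fin n) | ∀ i, 0 ≤ s i} := by
  have h : {s : EuclideanSpace ℝ (Fin n) | ∀ i, 0 ≤ s i} = ⋂ i, {s | 0 ≤ s i} := by
    ext s; simp
  rw [h]
  exact MeasurableSet.iInter fun i =>
    measurableSet_le measurable_const (EuclideanSpace.proj (𝕜 := ℝ) i).continuous.measurable

lemma isOpen_opos' : IsOpen {s : EuclideanSpace ℝ (Fin n) | ∀ i, 0 < s i} := by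
  have h : {s : EuclideanSpace ℝ (Fin n) | ∀ i, 0 < s i} = ⋂ i, {s | 0 < s i} := by
    ext s; simp
  rw [h]
  exact isOpen_iInter_of_finite fun i =>
    isOpen_lt continuous_const (EuclideanSpace.proj (𝕜 := ℝ) i).continuous

lemma cone_ae_opos' :
    {s : EuclideanSpace ℝ (Fin n) | ∀ i, 0 ≤ s i} =ᵐ[volume]
      {s : EuclideanSpace ℝ (Fin n) | ∀ i, 0 < s i} := by
  rw [MeasureTheory.ae_eq_set]
  constructor
  · refine measure_mono_null (t := ⋃ i, {s : EuclideanSpace ℝ (Fin n) | s i = 0}) ?_ ?_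
    · intro s hs
      obtain ⟨h2, h1⟩ := hs
      simp only [mem_setOf_eq] at h1 h2
      push_neg at h1
      obtain ⟨i, hi⟩ := h1
      exact mem_iUnion.2 ⟨i, le_antisymm hi (h2 i)⟩
    · apply measure_iUnion_null
      intro i
      refine measure_mono_null (t := (LinearMap.ker (EuclideanSpace.projₗ (𝕜 := ℝ) i) : Set (EuclideanSpace ℝ (Fin n)))) ?_ ?_
      · intro s hs
        simpa [LinearMap.mem_ker] using hs
      · apply MeasureTheory.Measure.addHaar_submodule
        intro h
        have h1 : EuclideanSpace.single i (1:ℝ) ∈ LinearMap.ker (EuclideanSpace.projₗ (𝕜 := ℝ) i) := by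
          rw [h]; trivial
        rw [LinearMap.mem_ker] at h1
        have h2 : (EuclideanSpace.single i (1:ℝ)) i = 0 := h1
        simp [EuclideanSpace.single_apply] at h2
  · have : {s : EuclideanSpace ℝ (Fin n) | ∀ i, 0 < s i} \ {s : EuclideanSpace ℝ (Fin n) | ∀ i, 0 ≤ s i} = ∅ := by
      rw [diff_eq_empty]
      intro s hs i
      exact (hs i).le
    rw [this]
    exact measure_empty


variable {X Y : Type*} [NormedAddCommGroup X] [NormedSpace ℂ X] [CompleteSpace X]
  [NormedAddCommGroup Y] [NormedSpace ℂ Y] [CompleteSpace Y]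

lemma joint_cont' (T : EuclideanSpace ℝ (Fin n) → (X →L[ℂ] Y))
    (hTcont : ∀ x : X, ContinuousOn (fun t => T t x)
      {t : EuclideanSpace ℝ (Fin n) | ∀ i, 0 < t i})
    (h : EuclideanSpace ℝ (Fin n) → X) (hh : Continuous h) :
    ContinuousOn (fun s => T s (h s)) {t : EuclideanSpace ℝ (Fin n) | ∀ i, 0 < t i} := by
  intro s₀ hs₀
  obtain ⟨r, hr, hball⟩ := Metric.isOpen_iff.1 isOpen_opos' s₀ hs₀
  set K := Metric.closedBall s₀ (r/2) with hK
  have hKU : K ⊆ {t : EuclideanSpace ℝ (Fin n) | ∀ i, 0 < t i} :=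
    subset_trans (Metric.closedBall_subset_ball (by linarith)) hball
  have hKc : IsCompact K := isCompact_closedBall _ _
  have hb : ∀ x : X, ∃ C, ∀ k : K, ‖T k x‖ ≤ C := by
    intro x
    obtain ⟨C, hC⟩ := hKc.exists_bound_of_continuousOn ((hTcont x).mono hKU)
    exact ⟨C, fun k => hC k k.2⟩
  obtain ⟨C, hC⟩ := banach_steinhaus (g := fun k : K => T k) hb
  have hmem : K ∈ nhds s₀ := Metric.closedBall_mem_nhds _ (by linarith)
  have hs₀K : s₀ ∈ K := Metric.mem_closedBall_self (by linarith)
  have h1 : ContinuousWithinAt (fun s => T s (h s₀)) K s₀ :=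
    ((hTcont (h s₀)).mono hKU) s₀ hs₀K
  have h2 : Tendsto (fun s => T s (h s) - T s (h s₀)) (nhdsWithin s₀ K) (nhds 0) := by
    apply squeeze_zero_norm' (a := fun s => C * ‖h s - h s₀‖)
    · filter_upwards [self_mem_nhdsWithin] with s hs
      calc ‖T s (h s) - T s (h s₀)‖ = ‖T s (h s - h s₀)‖ := by rw [map_sub]
        _ ≤ ‖T s‖ * ‖h s - h s₀‖ := (T s).le_opNorm _
        _ ≤ C * ‖h s - h s₀‖ :=
            mul_le_mul_of_nonneg_right (hC ⟨s, hs⟩) (norm_nonneg _)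
    · have hcont : Continuous (fun s => C * ‖h s - h s₀‖) :=
        continuous_const.mul ((hh.sub continuous_const).norm)
      have := (hcont.tendsto s₀).mono_left (nhdsWithin_le_nhds (s := K))
      simpa using this
  have h3 : ContinuousWithinAt (fun s => T s (h s)) K s₀ := by
    have := h2.add h1
    simpa [ContinuousWithinAt] using this
  exact (h3.continuousAt hmem).continuousWithinAt

set_option maxHeartbeats 1000000 in
theorem stmt2_aux (T : EuclideanSpace ℝ (Fin n) → (X →L[ℂ] Y))
    (hTcont : ∀ x : X, ContinuousOn (fun t => T t x)
      {t : EuclideanSpace ℝ (Fin n) | ∀ i, 0 < t i})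
    (ν : EuclideanSpace ℝ (Fin n) → ℝ)
    (c : ℝ) (hc : 0 < c) (hνc : ∀ t, c ≤ ν t)
    (w : EuclideanSpace ℝ (Fin n) → ℝ) (hw : ∀ t, 0 < w t)
    (hsub : ∀ x y : EuclideanSpace ℝ (Fin n), (∀ i, 0 ≤ y i) → ν (x + y) ≤ ν x * w y)
    (hint : MeasureTheory.IntegrableOn
      (fun t => (1 + w t) * ‖T t‖) {t : EuclideanSpace ℝ (Fin n) | ∀ i, 0 < t i})
    (R : Set (ℕ → EuclideanSpace ℝ (Fin n))) (hRne : R.Nonempty)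
    (f : EuclideanSpace ℝ (Fin n) → X)
    (hfb : ∃ M : ℝ, ∀ t, ‖f t‖ ≤ M) (hfc : Continuous f)
    (hfap : RC0nuAP R ν f)
    (F : EuclideanSpace ℝ (Fin n) → Y)
    (hFdef : ∀ t, F t =
      ∫ s in {s : EuclideanSpace ℝ (Fin n) | ∀ i, 0 ≤ s i}, T s (f (t - s))) :
    (∃ M : ℝ, ∀ t, ‖F t‖ ≤ M) ∧ Continuous F ∧ RC0nuAP R ν F := by
  have hνpos : ∀ t, 0 < ν t := fun t => lt_of_lt_of_le hc (hνc t)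
  set cone : Set (EuclideanSpace ℝ (Fin n)) := {s | ∀ i, 0 ≤ s i} with hconedef
  have hconeM : MeasurableSet cone := measurableSet_cone'
  have hres : volume.restrict cone
      = volume.restrict {s : EuclideanSpace ℝ (Fin n) | ∀ i, 0 < s i} :=
    MeasureTheory.Measure.restrict_congr_set cone_ae_opos'
  -- integrability of the weight
  have hq_int : IntegrableOn (fun s => (1 + w s) * ‖T s‖) cone := by
    show Integrable _ (volume.restrict cone)
    rw [hres]; exact hint
  have hqnn : ∀ s, 0 ≤ (1 + w s) * ‖T s‖ := fun s =>
    mul_nonneg (by linarith [hw s]) (norm_nonneg _)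
  set I : ℝ := ∫ s in cone, (1 + w s) * ‖T s‖ with hIdef
  have hI0 : 0 ≤ I := integral_nonneg hqnn
  -- integrability of convolution integrands
  have key_int : ∀ (h : EuclideanSpace ℝ (Fin n) → X), Continuous h → ∀ M : ℝ,
      (∀ u, ‖h u‖ ≤ M) → IntegrableOn (fun s => T s (h s)) cone := by
    intro h hh M hM
    have hM0 : 0 ≤ M := le_trans (norm_nonneg _) (hM 0)
    have hmeas : AEStronglyMeasurable (fun s => T s (h s)) (volume.restrict cone) := by
      rw [hres]
      exact (joint_cont' T hTcont h hh).aestronglyMeasurable isOpen_opos'.measurableSet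
    refine Integrable.mono' (hq_int.mul_const M) hmeas ?_
    refine ae_of_all _ fun s => ?_
    calc ‖T s (h s)‖ ≤ ‖T s‖ * ‖h s‖ := (T s).le_opNorm _
      _ ≤ ‖T s‖ * M := mul_le_mul_of_nonneg_left (hM s) (norm_nonneg _)
      _ ≤ (1 + w s) * ‖T s‖ * M := by
          have h1 : ‖T s‖ ≤ (1 + w s) * ‖T s‖ := by nlinarith [hw s, norm_nonneg (T s)]
          exact mul_le_mul_of_nonneg_right h1 hM0
  -- norm bound for convolutions
  have hFbound : ∀ (h : EuclideanSpace ℝ (Fin n) → X) (M : ℝ), 0 ≤ M → (∀ u, ‖h u‖ ≤ M) →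
      ∀ t, ‖∫ s in cone, T s (h (t - s))‖ ≤ I * M := by
    intro h M hM0 hM t
    have h1 : ‖∫ s in cone, T s (h (t - s))‖ ≤ ∫ s in cone, (1 + w s) * ‖T s‖ * M := by
      refine norm_integral_le_of_norm_le (hq_int.mul_const M) (ae_of_all _ fun s => ?_)
      calc ‖T s (h (t - s))‖ ≤ ‖T s‖ * ‖h (t - s)‖ := (T s).le_opNorm _
        _ ≤ ‖T s‖ * M := mul_le_mul_of_nonneg_left (hM _) (norm_nonneg _)
        _ ≤ (1 + w s) * ‖T s‖ * M := by
            have h1 : ‖T s‖ ≤ (1 + w s) * ‖T s‖ := by nlinarith [hw s, norm_nonneg (T s)]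
            exact mul_le_mul_of_nonneg_right h1 hM0
    calc ‖∫ s in cone, T s (h (t - s))‖ ≤ ∫ s in cone, (1 + w s) * ‖T s‖ * M := h1
      _ = I * M := by rw [integral_mul_const]
  -- continuity of convolutions
  have hconvc : ∀ (h : EuclideanSpace ℝ (Fin n) → X), Continuous h → ∀ M : ℝ,
      (∀ u, ‖h u‖ ≤ M) → Continuous (fun t => ∫ s in cone, T s (h (t - s))) := by
    intro h hh M hM
    rw [continuous_iff_continuousAt]
    intro t₀
    apply continuousAt_of_dominated (bound := fun s => (1 + w s) * ‖T s‖ * M)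
    · refine Eventually.of_forall fun t => ?_
      exact (key_int (fun u => h (t - u)) (hh.comp (continuous_const.sub continuous_id)) M
        (fun u => hM _)).aestronglyMeasurable
    · refine Eventually.of_forall fun t => ae_of_all _ fun s => ?_
      have hM0 : 0 ≤ M := le_trans (norm_nonneg _) (hM 0)
      calc ‖T s (h (t - s))‖ ≤ ‖T s‖ * ‖h (t - s)‖ := (T s).le_opNorm _
        _ ≤ ‖T s‖ * M := mul_le_mul_of_nonneg_left (hM _) (norm_nonneg _)
        _ ≤ (1 + w s) * ‖T s‖ * M := by
            have h1 : ‖T s‖ ≤ (1 + w s) * ‖T s‖ := by nlinarith [hw s, norm_nonneg (T s)]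
            exact mul_le_mul_of_nonneg_right h1 hM0
    · exact hq_int.mul_const M
    · refine ae_of_all _ fun s => ?_
      exact ((T s).continuous.comp (hh.comp (continuous_id.sub continuous_const))).continuousAt
  -- pointwise key estimate
  have hkey : ∀ (D : EuclideanSpace ℝ (Fin n) → X) (t s : EuclideanSpace ℝ (Fin n)),
      s ∈ cone → ∀ B : ℝ, ‖D (t - s)‖ * ν (t - s) ≤ B →
      ‖T s (D (t - s))‖ ≤ (1 + w s) * ‖T s‖ * (B / ν t) := by
    intro D t s hs B hB
    have hνt : 0 < ν t := hνpos t
    have hνts : 0 < ν (t - s) := hνpos _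
    rw [← mul_div_assoc, le_div_iff₀ hνt]
    have h1 : ‖T s (D (t - s))‖ ≤ ‖T s‖ * ‖D (t - s)‖ := (T s).le_opNorm _
    have h2 : ν t ≤ ν (t - s) * w s := by
      have := hsub (t - s) s hs
      rwa [sub_add_cancel] at this
    have hBnn : 0 ≤ B := le_trans (mul_nonneg (norm_nonneg _) hνts.le) hB
    calc ‖T s (D (t - s))‖ * ν t ≤ (‖T s‖ * ‖D (t - s)‖) * (ν (t - s) * w s) :=
          mul_le_mul h1 h2 hνt.le (mul_nonneg (norm_nonneg _) (norm_nonneg _))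
      _ = (w s * ‖T s‖) * (‖D (t - s)‖ * ν (t - s)) := by ring
      _ ≤ ((1 + w s) * ‖T s‖) * B := by
          refine mul_le_mul ?_ hB (mul_nonneg (norm_nonneg _) hνts.le) ?_
          · nlinarith [hw s, norm_nonneg (T s)]
          · exact mul_nonneg (by linarith [hw s]) (norm_nonneg _)
  -- uniform bound for convolutions against weighted sup
  have hbound : ∀ (D : EuclideanSpace ℝ (Fin n) → X) (t : EuclideanSpace ℝ (Fin n)) (B : ℝ),
      (∀ u, ‖D u‖ * ν u ≤ B) →
      ‖∫ s in cone, T s (D (t - s))‖ * ν t ≤ I * B := by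
    intro D t B hB
    have hνt : 0 < ν t := hνpos t
    have h1 : ‖∫ s in cone, T s (D (t - s))‖ ≤ ∫ s in cone, (1 + w s) * ‖T s‖ * (B / ν t) := by
      refine norm_integral_le_of_norm_le (hq_int.mul_const (B / ν t)) ?_
      refine (ae_restrict_iff' hconeM).2 (ae_of_all _ fun s hs => ?_)
      exact hkey D t s hs B (hB _)
    calc ‖∫ s in cone, T s (D (t - s))‖ * ν t
        ≤ (∫ s in cone, (1 + w s) * ‖T s‖ * (B / ν t)) * ν t :=
          mul_le_mul_of_nonneg_right h1 hνt.le
      _ = (I * (B / ν t)) * ν t := by rw [integral_mul_const]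
      _ = I * B := by field_simp
  -- characterization of the comap-filter tendsto
  have tendsto_use : ∀ φ : EuclideanSpace ℝ (Fin n) → ℝ,
      Tendsto φ (Filter.comap (fun t : EuclideanSpace ℝ (Fin n) => ‖t‖) Filter.atTop) (nhds 0) →
      ∀ ε : ℝ, 0 < ε → ∃ A, ∀ u, A ≤ ‖u‖ → φ u ≤ ε := by
    intro φ hφ ε hε
    have h1 := Metric.tendsto_nhds.1 hφ ε hε
    rw [Filter.eventually_comap] at h1
    rw [Filter.eventually_atTop] at h1
    obtain ⟨A, hA⟩ := h1
    refine ⟨A, fun u hu => ?_⟩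
    have := hA ‖u‖ hu u rfl
    rw [Real.dist_eq, sub_zero] at this
    exact le_of_lt (lt_of_abs_lt this)
  have tendsto_char : ∀ φ : EuclideanSpace ℝ (Fin n) → ℝ, (∀ t, 0 ≤ φ t) →
      (∀ ε : ℝ, 0 < ε → ∃ A, ∀ u, A ≤ ‖u‖ → φ u ≤ ε) →
      Tendsto φ (Filter.comap (fun t : EuclideanSpace ℝ (Fin n) => ‖t‖) Filter.atTop) (nhds 0) := by
    intro φ hφ0 hφ
    rw [Metric.tendsto_nhds]
    intro ε hε
    obtain ⟨A, hA⟩ := hφ (ε / 2) (by linarith)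
    rw [Filter.eventually_comap, Filter.eventually_atTop]
    refine ⟨A, fun b hb u hu => ?_⟩
    rw [Real.dist_eq, sub_zero, abs_of_nonneg (hφ0 u)]
    have := hA u (hu ▸ hb)
    linarith
  -- tail of the weight integral
  have htail : ∀ δ : ℝ, 0 < δ → ∃ m : ℕ,
      ∫ s in cone \ Metric.ball (0 : EuclideanSpace ℝ (Fin n)) m, (1 + w s) * ‖T s‖ ≤ δ := by
    intro δ hδ
    have hmeas : ∀ i : ℕ, MeasurableSet (cone ∩ Metric.ball (0 : EuclideanSpace ℝ (Fin n)) i) :=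
      fun i => hconeM.inter measurableSet_ball
    have hmono' : Monotone (fun i : ℕ => cone ∩ Metric.ball (0 : EuclideanSpace ℝ (Fin n)) i) := by
      intro i j hij
      exact inter_subset_inter_right _ (Metric.ball_subset_ball (by exact_mod_cast hij))
    have hUnion : (⋃ i : ℕ, cone ∩ Metric.ball (0 : EuclideanSpace ℝ (Fin n)) i) = cone := by
      ext s
      simp only [mem_iUnion, mem_inter_iff, Metric.mem_ball]
      constructor
      · rintro ⟨i, hi, _⟩; exact hi
      · intro hs
        obtain ⟨i, hi⟩ := exists_nat_gt (dist s 0)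
        exact ⟨i, hs, hi⟩
    have hlim := tendsto_setIntegral_of_monotone hmeas hmono' (by rw [hUnion]; exact hq_int)
    rw [hUnion] at hlim
    have hlim2 : Tendsto (fun i : ℕ =>
        ∫ s in cone \ Metric.ball (0 : EuclideanSpace ℝ (Fin n)) i, (1 + w s) * ‖T s‖)
        atTop (nhds 0) := by
      have heq : ∀ i : ℕ,
          ∫ s in cone \ Metric.ball (0 : EuclideanSpace ℝ (Fin n)) i, (1 + w s) * ‖T s‖
          = (∫ s in cone, (1 + w s) * ‖T s‖)
            - ∫ s in cone ∩ Metric.ball (0 : EuclideanSpace ℝ (Fin n)) i, (1 + w s) * ‖T s‖ := by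
        intro i
        have h0 := integral_inter_add_diff (μ := volume) (s := cone)
          (t := Metric.ball (0 : EuclideanSpace ℝ (Fin n)) i)
          (f := fun s => (1 + w s) * ‖T s‖) measurableSet_ball hq_int
        linarith [h0]
      simp_rw [heq]
      have h1 := (tendsto_const_nhds
        (x := ∫ s in cone, (1 + w s) * ‖T s‖) (f := atTop (α := ℕ))).sub hlim
      simpa using h1
    obtain ⟨m, hm⟩ := (hlim2.eventually (gt_mem_nhds hδ)).exists
    exact ⟨m, hm.le⟩
  -- boundedness and continuity of F
  obtain ⟨M₀, hM₀⟩ := hfb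
  set M : ℝ := max M₀ 0 with hMdef
  have hM : ∀ t, ‖f t‖ ≤ M := fun t => le_trans (hM₀ t) (le_max_left _ _)
  have hM0 : (0:ℝ) ≤ M := le_max_right _ _
  have hFeq : F = fun t => ∫ s in cone, T s (f (t - s)) := funext hFdef
  have hFc : Continuous F := by rw [hFeq]; exact hconvc f hfc M hM
  refine ⟨⟨I * M, fun t => by rw [hFeq]; exact hFbound f M hM0 hM t⟩, hFc, ?_⟩
  -- almost periodicity
  intro b hb
  obtain ⟨k, hk, g, hg1, hg2⟩ := hfap b hb
  obtain ⟨N₀, hN₀⟩ := hg2 1 one_pos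
  have hφ1 : ∀ l t, ‖f (t + b (k (l + N₀))) - g t‖ * ν t ≤ 1 :=
    fun l t => hN₀ (l + N₀) (by omega) t
  have hgc : Continuous g := by
    have h1 : Continuous (fun t => f (t + b (k (0 + N₀))) - g t) := (hg1 (0 + N₀)).1
    have h2 : Continuous (fun t => f (t + b (k (0 + N₀)))) :=
      hfc.comp (continuous_id.add continuous_const)
    have h3 := h2.sub h1
    convert h3 using 1; funext t; simp
  have hgb : ∀ t, ‖g t‖ ≤ M + 1 / c := by
    intro t
    have h1 : ‖f (t + b (k (0 + N₀))) - g t‖ ≤ 1 / c := by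
      have h2 := hφ1 0 t
      have h3 : ‖f (t + b (k (0 + N₀))) - g t‖ ≤ 1 / ν t := by
        rw [le_div_iff₀ (hνpos t)]; exact h2
      exact le_trans h3 (one_div_le_one_div_of_le hc (hνc t))
    calc ‖g t‖ = ‖f (t + b (k (0 + N₀))) - (f (t + b (k (0 + N₀))) - g t)‖ := by
          congr 1; abel
      _ ≤ ‖f (t + b (k (0 + N₀)))‖ + ‖f (t + b (k (0 + N₀))) - g t‖ := norm_sub_le _ _
      _ ≤ M + 1 / c := add_le_add (hM _) h1
  set G : EuclideanSpace ℝ (Fin n) → Y := fun t => ∫ s in cone, T s (g (t - s)) with hGdef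
  have hGc : Continuous G := hconvc g hgc (M + 1/c) hgb
  have hdiff : ∀ (β t : EuclideanSpace ℝ (Fin n)),
      F (t + β) - G t = ∫ s in cone, T s (f (t - s + β) - g (t - s)) := by
    intro β t
    have h₁ : IntegrableOn (fun s => T s (f (t + β - s))) cone :=
      key_int (fun s => f (t + β - s)) (hfc.comp (continuous_const.sub continuous_id)) M
        (fun u => hM _)
    have h₂ : IntegrableOn (fun s => T s (g (t - s))) cone :=
      key_int (fun s => g (t - s)) (hgc.comp (continuous_const.sub continuous_id)) (M + 1/c)
        (fun u => hgb _)
    rw [hFeq, hGdef]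
    show (∫ s in cone, T s (f (t + β - s))) - (∫ s in cone, T s (g (t - s))) = _
    rw [← integral_sub h₁ h₂]
    refine integral_congr_ae (ae_of_all _ fun s => ?_)
    show (T s) (f (t + β - s)) - (T s) (g (t - s)) = (T s) (f (t - s + β) - g (t - s))
    rw [← map_sub]
    have h4 : t + β - s = t - s + β := by abel
    rw [h4]
  refine ⟨fun l => k (l + N₀), fun a b' hab => hk (by omega), G, ?_, ?_⟩
  · -- C0nu membership
    intro l
    set β := b (k (l + N₀)) with hβ
    have hmem := hg1 (l + N₀)
    have hDc : Continuous (fun t => f (t + β) - g t) := hmem.1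
    have hDt := hmem.2
    refine ⟨(hFc.comp (continuous_id.add continuous_const)).sub hGc, ?_⟩
    apply tendsto_char
    · intro t; exact mul_nonneg (norm_nonneg _) (le_of_lt (hνpos t))
    intro ε hε
    set η : ℝ := ε / (2 * (I + 1)) with hηdef
    have hη : 0 < η := div_pos hε (by nlinarith [hI0])
    obtain ⟨A, hA⟩ := tendsto_use _ hDt η hη
    obtain ⟨m, hm⟩ := htail (ε / 2) (by linarith)
    refine ⟨A + m + 1, fun t ht => ?_⟩
    have hνt : 0 < ν t := hνpos t
    have hν0 : ν t ≠ 0 := ne_of_gt hνt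
    show ‖F (t + β) - G t‖ * ν t ≤ ε
    rw [hdiff β t]
    set ρ : EuclideanSpace ℝ (Fin n) → ℝ := fun s =>
      (1 + w s) * ‖T s‖ * (η / ν t)
        + Set.indicator (Metric.ball t A) (fun s => (1 + w s) * ‖T s‖ * (1 / ν t)) s with hρ
    have hρint : Integrable ρ (volume.restrict cone) :=
      (hq_int.mul_const (η / ν t)).add
        ((hq_int.mul_const (1 / ν t)).indicator measurableSet_ball)
    have hptwise : ∀ s ∈ cone, ‖T s (f (t - s + β) - g (t - s))‖ ≤ ρ s := by
      intro s hs
      have hDval : (fun u => f (u + β) - g u) (t - s) = f (t - s + β) - g (t - s) := rfl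
      rw [← hDval]
      by_cases hcase : A ≤ ‖t - s‖
      · have h1 := hkey (fun u => f (u + β) - g u) t s hs η (hA _ hcase)
        refine le_trans h1 ?_
        rw [hρ]
        have h2 : 0 ≤ Set.indicator (Metric.ball t A)
            (fun s => (1 + w s) * ‖T s‖ * (1 / ν t)) s :=
          Set.indicator_nonneg
            (fun s _ => mul_nonneg (hqnn s) (one_div_nonneg.2 hνt.le)) s
        simp only []
        linarith
      · push_neg at hcase
        have hsball : s ∈ Metric.ball t A := by
          rw [Metric.mem_ball, dist_eq_norm]
          rwa [← norm_neg, neg_sub]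
        have h1 := hkey (fun u => f (u + β) - g u) t s hs 1 (hφ1 l (t - s))
        refine le_trans h1 ?_
        rw [hρ]
        simp only [Set.indicator_of_mem hsball]
        have h2 : 0 ≤ (1 + w s) * ‖T s‖ * (η / ν t) :=
          mul_nonneg (hqnn s) (div_nonneg hη.le hνt.le)
        linarith
    have h1 : ‖∫ s in cone, T s (f (t - s + β) - g (t - s))‖ ≤ ∫ s in cone, ρ s :=
      norm_integral_le_of_norm_le hρint ((ae_restrict_iff' hconeM).2 (ae_of_all _ hptwise))
    have h2 : ∫ s in cone, ρ s = I * (η / ν t)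
        + ∫ s in Metric.ball t A ∩ cone, (1 + w s) * ‖T s‖ * (1 / ν t) := by
      rw [hρ]
      rw [integral_add (hq_int.mul_const (η / ν t))
        ((hq_int.mul_const (1 / ν t)).indicator measurableSet_ball)]
      rw [integral_mul_const, integral_indicator measurableSet_ball,
        Measure.restrict_restrict measurableSet_ball, ← hIdef]
    have h3 : ∫ s in Metric.ball t A ∩ cone, (1 + w s) * ‖T s‖ * (1 / ν t)
        ≤ ∫ s in cone \ Metric.ball (0 : EuclideanSpace ℝ (Fin n)) m,
            (1 + w s) * ‖T s‖ * (1 / ν t) := by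
      have hq1 : IntegrableOn (fun s => (1 + w s) * ‖T s‖ * (1 / ν t)) cone :=
        hq_int.mul_const (1 / ν t)
      refine setIntegral_mono_set (hq1.mono_set diff_subset) ?_ ?_
      · exact ae_of_all _ fun s => mul_nonneg (hqnn s) (one_div_nonneg.2 hνt.le)
      · refine HasSubset.Subset.eventuallyLE ?_
        intro s hs
        obtain ⟨hs1, hs2⟩ := hs
        refine ⟨hs2, fun hs3 => ?_⟩
        rw [Metric.mem_ball, dist_eq_norm, sub_zero] at hs3
        rw [Metric.mem_ball, dist_eq_norm] at hs1
        have h5 : ‖t‖ ≤ ‖s‖ + ‖t - s‖ := by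
          calc ‖t‖ = ‖s + (t - s)‖ := by congr 1; abel
            _ ≤ ‖s‖ + ‖t - s‖ := norm_add_le _ _
        rw [norm_sub_rev] at h5
        have hmt : (m : ℝ) ≤ A + m + 1 := by linarith
        linarith
    have h4 : ∫ s in cone \ Metric.ball (0 : EuclideanSpace ℝ (Fin n)) m,
        (1 + w s) * ‖T s‖ * (1 / ν t) ≤ (ε / 2) * (1 / ν t) := by
      rw [integral_mul_const]
      exact mul_le_mul_of_nonneg_right hm (one_div_nonneg.2 hνt.le)
    have h5 : I * η ≤ ε / 2 := by
      rw [hηdef, ← mul_div_assoc, div_le_div_iff₀ (by nlinarith [hI0]) (by norm_num)]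
      nlinarith [hI0, hε.le]
    calc ‖∫ s in cone, T s (f (t - s + β) - g (t - s))‖ * ν t
        ≤ (I * (η / ν t) + (ε / 2) * (1 / ν t)) * ν t := by
          have h6 : ‖∫ s in cone, T s (f (t - s + β) - g (t - s))‖
              ≤ I * (η / ν t) + (ε / 2) * (1 / ν t) := by linarith
          exact mul_le_mul_of_nonneg_right h6 hνt.le
      _ = I * η + ε / 2 := by field_simp
      _ ≤ ε := by linarith
  · -- uniform convergence
    intro ε hε
    obtain ⟨N, hN⟩ := hg2 (ε / (I + 1)) (div_pos hε (by nlinarith [hI0]))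
    refine ⟨N, fun l hl t => ?_⟩
    have hB : ∀ u, ‖f (u + b (k (l + N₀))) - g u‖ * ν u ≤ ε / (I + 1) :=
      fun u => hN (l + N₀) (by omega) u
    have h1 := hbound (fun u => f (u + b (k (l + N₀))) - g u) t (ε / (I + 1)) hB
    have h2 := hdiff (b (k (l + N₀))) t
    rw [h2]
    refine le_trans h1 ?_
    rw [← mul_div_assoc, div_le_iff₀ (by nlinarith [hI0])]
    nlinarith [hI0, hε.le]

end Stmt2Aux

/-- Invariance of `(R,𝒫)`-multi-almost periodicity under the action of the infinite
convolution product `F(t) = ∫_{[0,∞)ⁿ} R(s) f(t−s) ds`. -/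
theorem stmt2 {n : ℕ} {X Y : Type*}
    [NormedAddCommGroup X] [NormedSpace ℂ X] [CompleteSpace X]
    [NormedAddCommGroup Y] [NormedSpace ℂ Y] [CompleteSpace Y]
    (T : EuclideanSpace ℝ (Fin n) → (X →L[ℂ] Y))
    (hTcont : ∀ x : X, ContinuousOn (fun t => T t x)
      {t : EuclideanSpace ℝ (Fin n) | ∀ i, 0 < t i})
    (ν : EuclideanSpace ℝ (Fin n) → ℝ)
    (c : ℝ) (hc : 0 < c) (hνc : ∀ t, c ≤ ν t)
    (w : EuclideanSpace ℝ (Fin n) → ℝ) (hw : ∀ t, 0 < w t)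
    (hsub : ∀ x y : EuclideanSpace ℝ (Fin n), (∀ i, 0 ≤ y i) → ν (x + y) ≤ ν x * w y)
    (hint : MeasureTheory.IntegrableOn
      (fun t => (1 + w t) * ‖T t‖) {t : EuclideanSpace ℝ (Fin n) | ∀ i, 0 < t i})
    (R : Set (ℕ → EuclideanSpace ℝ (Fin n))) (hRne : R.Nonempty)
    (f : EuclideanSpace ℝ (Fin n) → X)
    (hfb : ∃ M : ℝ, ∀ t, ‖f t‖ ≤ M) (hfc : Continuous f)
    (hfap : RC0nuAP R ν f)
    (F : EuclideanSpace ℝ (Fin n) → Y)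
    (hFdef : ∀ t, F t =
      ∫ s in {s : EuclideanSpace ℝ (Fin n) | ∀ i, 0 ≤ s i}, T s (f (t - s))) :
    (∃ M : ℝ, ∀ t, ‖F t‖ ≤ M) ∧ Continuous F ∧ RC0nuAP R ν F := by
  exact stmt2_aux T hTcont ν c hc hνc w hw hsub hint R hRne f hfb hfc hfap F hFdef
end
end

section
/- Let X and Y be complex Banach spaces, let (R(t))_{t∈(0,∞)ⁿ} ⊆ L(X,Y) be a strongly continuous operator family, let c ∈ ℂ \ {0}, let ∅ ≠ I' ⊆ ℝⁿ, let ν : ℝⁿ → (0,∞) be a function such that 1/ν is locally bounded, let w : ℝⁿ → (0,∞) satisfy ν(x+y) ≤ ν(x)w(y) for all x ∈ ℝⁿ and y ∈ [0,∞)ⁿ, and assume ∫_{(0,∞)ⁿ} (1+w(t))‖R(t)‖ dt < ∞. Let 𝒫_X and 𝒫_Y be the metric spaces associated with C_{0,ν}(ℝⁿ : X) and C_{0,ν}(ℝⁿ : Y) respectively. If f : ℝⁿ → X is bounded, continuous and Bohr (I',c,𝒫_X)-almost periodic, then the function F : ℝⁿ → Y given by F(t) := ∫_{[0,∞)ⁿ}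 R(s) f(t−s) ds is bounded, continuous and Bohr (I',c,𝒫_Y)-almost periodic. -/
noncomputable section

open Filter MeasureTheory

/-- Bohr `(I',c,𝒫)`-almost periodicity of `F : ℝⁿ → Z`, where `𝒫` is the metric space
associated with `C_{0,ν}(ℝⁿ : Z)` (so that `‖g‖_P = sup_t ‖g(t)‖ ν(t)`). -/
def BohrIcC0nuAP {n : ℕ} {Z : Type*} [NormedAddCommGroup Z] [NormedSpace ℂ Z]
    (I' : Set (EuclideanSpace ℝ (Fin n))) (c : ℂ) (ν : EuclideanSpace ℝ (Fin n) → ℝ)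
    (F : EuclideanSpace ℝ (Fin n) → Z) : Prop :=
  ∀ ε : ℝ, 0 < ε → ∃ l : ℝ, 0 < l ∧ ∀ t₀ ∈ I', ∃ τ ∈ I', ‖τ - t₀‖ ≤ l ∧
    (fun t => F (t + τ) - c • F t) ∈ C0nu ν ∧
    ∀ t, ‖F (t + τ) - c • F t‖ * ν t ≤ ε

/-- Invariance of Bohr `(I',c,𝒫)`-almost periodicity under the action of the infinite
convolution product `F(t) = ∫_{[0,∞)ⁿ} R(s) f(t−s) ds`. -/
theorem stmt4 {n : ℕ} {X Y : Type*}
    [NormedAddCommGroup X] [NormedSpace ℂ X] [CompleteSpace X]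
    [NormedAddCommGroup Y] [NormedSpace ℂ Y] [CompleteSpace Y]
    (T : EuclideanSpace ℝ (Fin n) → (X →L[ℂ] Y))
    (hTcont : ∀ x : X, ContinuousOn (fun t => T t x)
      {t : EuclideanSpace ℝ (Fin n) | ∀ i, 0 < t i})
    (c : ℂ) (hcne : c ≠ 0)
    (I' : Set (EuclideanSpace ℝ (Fin n))) (hI' : I'.Nonempty)
    (ν : EuclideanSpace ℝ (Fin n) → ℝ) (hν : ∀ t, 0 < ν t)
    (hloc : ∀ r : ℝ, 0 < r → ∃ M : ℝ, ∀ t : EuclideanSpace ℝ (Fin n), ‖t‖ ≤ r → 1 / ν t ≤ M)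
    (w : EuclideanSpace ℝ (Fin n) → ℝ) (hw : ∀ t, 0 < w t)
    (hsub : ∀ x y : EuclideanSpace ℝ (Fin n), (∀ i, 0 ≤ y i) → ν (x + y) ≤ ν x * w y)
    (hint : MeasureTheory.IntegrableOn
      (fun t => (1 + w t) * ‖T t‖) {t : EuclideanSpace ℝ (Fin n) | ∀ i, 0 < t i})
    (f : EuclideanSpace ℝ (Fin n) → X)
    (hfb : ∃ M : ℝ, ∀ t, ‖f t‖ ≤ M) (hfc : Continuous f)
    (hfap : BohrIcC0nuAP I' c ν f)
    (F : EuclideanSpace ℝ (Fin n) → Y)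
    (hFdef : ∀ t, F t =
      ∫ s in {s : EuclideanSpace ℝ (Fin n) | ∀ i, 0 ≤ s i}, T s (f (t - s))) :
    (∃ M : ℝ, ∀ t, ‖F t‖ ≤ M) ∧ Continuous F ∧ BohrIcC0nuAP I' c ν F := by
  classical
  obtain ⟨M, hM⟩ := hfb
  have hM0 : 0 ≤ M := (norm_nonneg _).trans (hM 0)
  set O : Set (EuclideanSpace ℝ (Fin n)) := {t : EuclideanSpace ℝ (Fin n) | ∀ i, 0 < t i} with hOdef
  set S : Set (EuclideanSpace ℝ (Fin n)) := {s : EuclideanSpace ℝ (Fin n) | ∀ i, 0 ≤ s i} with hSdef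
  have hOopen : IsOpen O := by
    have : O = ⋂ i, (fun t : EuclideanSpace ℝ (Fin n) => t i) ⁻¹' Set.Ioi 0 := by
      ext t; simp [hOdef, Set.mem_iInter]
    rw [this]
    exact isOpen_iInter_of_finite fun i =>
      isOpen_Ioi.preimage (EuclideanSpace.proj (𝕜 := ℝ) i).continuous
  have hSclosed : IsClosed S := by
    have : S = ⋂ i, (fun t : EuclideanSpace ℝ (Fin n) => t i) ⁻¹' Set.Ici 0 := by
      ext t; simp [hSdef, Set.mem_iInter]
    rw [this]
    exact isClosed_iInter fun i =>
      isClosed_Ici.preimage (EuclideanSpace.proj (𝕜 := ℝ) i).continuous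
  have hSmeas : MeasurableSet S := hSclosed.measurableSet
  have hOS : O ⊆ S := fun t ht i => (ht i).le
  -- the boundary is null
  have hnull : volume (S \ O) = 0 := by
    have hsub2 : S \ O ⊆ ⋃ i, (LinearMap.ker ((EuclideanSpace.proj (𝕜 := ℝ) i :
        EuclideanSpace ℝ (Fin n) →L[ℝ] ℝ) : EuclideanSpace ℝ (Fin n) →ₗ[ℝ] ℝ) : Set (EuclideanSpace ℝ (Fin n))) := by
      rintro s ⟨hsS, hsO⟩
      simp only [hOdef, Set.mem_setOf_eq, not_forall] at hsO
      obtain ⟨i, hi⟩ := hsO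
      refine Set.mem_iUnion.2 ⟨i, ?_⟩
      have : s i = 0 := le_antisymm (not_lt.1 hi) (hsS i)
      simpa [LinearMap.mem_ker] using this
    refine measure_mono_null hsub2 (measure_iUnion_null fun i => ?_)
    refine Measure.addHaar_submodule _ _ ?_
    intro htop
    have h1 : EuclideanSpace.single i (1:ℝ) ∈ LinearMap.ker
        ((EuclideanSpace.proj (𝕜 := ℝ) i : EuclideanSpace ℝ (Fin n) →L[ℝ] ℝ) : EuclideanSpace ℝ (Fin n) →ₗ[ℝ] ℝ) := by
      rw [htop]; trivial
    simp [LinearMap.mem_ker] at h1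
  have hrestrict : volume.restrict S = volume.restrict O := by
    refine Measure.restrict_congr_set (ae_eq_set.2 ⟨hnull, ?_⟩)
    rw [Set.diff_eq_empty.2 hOS]; simp
  -- local operator norm bounds via Banach–Steinhaus
  have hTloc : ∀ s₀ ∈ O, ∃ r > 0, Metric.closedBall s₀ r ⊆ O ∧
      ∃ C, ∀ s ∈ Metric.closedBall s₀ r, ‖T s‖ ≤ C := by
    intro s₀ hs₀
    obtain ⟨r, hr, hball⟩ := Metric.nhds_basis_closedBall.mem_iff.1 (hOopen.mem_nhds hs₀)
    have hcpt : IsCompact (Metric.closedBall s₀ r) := isCompact_closedBall _ _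
    have hb : ∀ x : X, ∃ C, ∀ s : Metric.closedBall s₀ r, ‖T s x‖ ≤ C := by
      intro x
      obtain ⟨C, hC⟩ := hcpt.exists_bound_of_continuousOn ((hTcont x).mono hball)
      exact ⟨C, fun s => hC s s.2⟩
    obtain ⟨C, hC⟩ := banach_steinhaus (g := fun s : Metric.closedBall s₀ r => T s) hb
    exact ⟨r, hr, hball, C, fun s hs => hC ⟨s, hs⟩⟩
  -- joint continuity on O
  have hjoint : ∀ h : EuclideanSpace ℝ (Fin n) → X, Continuous h →
      ContinuousOn (fun s => T s (h s)) O := by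
    intro h hh s₀ hs₀
    obtain ⟨r, hr, hsubO, C, hC⟩ := hTloc s₀ hs₀
    have h1 : ContinuousWithinAt (fun s => T s (h s₀)) O s₀ := hTcont (h s₀) s₀ hs₀
    have h2 : Tendsto (fun s => T s (h s) - T s (h s₀)) (nhdsWithin s₀ O) (nhds 0) := by
      have hev : ∀ᶠ s in nhdsWithin s₀ O,
          ‖T s (h s) - T s (h s₀)‖ ≤ C * ‖h s - h s₀‖ := by
        refine Filter.eventually_iff_exists_mem.2
          ⟨Metric.closedBall s₀ r, mem_nhdsWithin_of_mem_nhds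
            (Metric.closedBall_mem_nhds s₀ hr), fun s hs => ?_⟩
        rw [← map_sub]
        exact ((T s).le_opNorm _).trans
          (mul_le_mul_of_nonneg_right (hC s hs) (norm_nonneg _))
      have hten : Tendsto (fun s => C * ‖h s - h s₀‖) (nhdsWithin s₀ O) (nhds 0) := by
        have h0 : Tendsto (fun s => ‖h s - h s₀‖) (nhds s₀) (nhds 0) := by
          have h0' : ContinuousAt (fun s => ‖h s - h s₀‖) s₀ :=
            ((hh.sub continuous_const).norm).continuousAt
          simpa using h0'.tendsto
        have h1 : Tendsto (fun s => ‖h s - h s₀‖) (nhdsWithin s₀ O) (nhds 0) :=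
          h0.mono_left nhdsWithin_le_nhds
        simpa using h1.const_mul C
      exact squeeze_zero_norm' hev hten
    have := h2.add h1
    simp only [sub_add_cancel, zero_add] at this
    exact this
  have hbound_int : IntegrableOn (fun s => (1 + w s) * ‖T s‖) S := by
    rw [IntegrableOn, hrestrict]; exact hint
  have hTub : ∀ s, ‖T s‖ ≤ (1 + w s) * ‖T s‖ := by
    intro s; nlinarith [hw s, norm_nonneg (T s)]
  have hbnn : ∀ s, 0 ≤ (1 + w s) * ‖T s‖ := by
    intro s; nlinarith [hw s, norm_nonneg (T s)]
  have hconv_meas : ∀ h : EuclideanSpace ℝ (Fin n) → X, Continuous h →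
      AEStronglyMeasurable (fun s => T s (h s)) (volume.restrict S) := by
    intro h hh
    rw [hrestrict]
    exact (hjoint h hh).aestronglyMeasurable hOopen.measurableSet
  have hconv_int : ∀ (h : EuclideanSpace ℝ (Fin n) → X) (Mh : ℝ), Continuous h →
      (∀ t, ‖h t‖ ≤ Mh) → IntegrableOn (fun s => T s (h s)) S := by
    intro h Mh hh hhb
    have hMh0 : 0 ≤ Mh := (norm_nonneg _).trans (hhb 0)
    refine (hbound_int.mul_const Mh).mono' (hconv_meas h hh) (ae_of_all _ fun s => ?_)
    calc ‖T s (h s)‖ ≤ ‖T s‖ * ‖h s‖ := (T s).le_opNorm _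
      _ ≤ ((1 + w s) * ‖T s‖) * Mh :=
          mul_le_mul (hTub s) (hhb s) (norm_nonneg _) (hbnn s)
  set K : ℝ := ∫ s in S, (1 + w s) * ‖T s‖ with hKdef
  have hK0 : 0 ≤ K := integral_nonneg fun s => hbnn s
  -- boundedness
  have hFb : ∀ t, ‖F t‖ ≤ K * M := by
    intro t
    rw [hFdef t]
    have h1 : ‖∫ s in S, T s (f (t - s))‖ ≤ ∫ s in S, (1 + w s) * ‖T s‖ * M := by
      refine norm_integral_le_of_norm_le (hbound_int.mul_const M) (ae_of_all _ fun s => ?_)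
      calc ‖T s (f (t - s))‖ ≤ ‖T s‖ * ‖f (t - s)‖ := (T s).le_opNorm _
        _ ≤ (1 + w s) * ‖T s‖ * M :=
            mul_le_mul (hTub s) (hM _) (norm_nonneg _) (hbnn s)
    rw [integral_mul_const] at h1
    exact h1
  -- continuity
  have hcsub : ∀ t : EuclideanSpace ℝ (Fin n),
      Continuous fun s : EuclideanSpace ℝ (Fin n) => t - s :=
    fun t => continuous_const.sub continuous_id
  have hFc : Continuous F := by
    have hFeq : F = fun t => ∫ s in S, T s (f (t - s)) := funext hFdef
    rw [hFeq]
    apply continuous_of_dominated (bound := fun s => (1 + w s) * ‖T s‖ * M)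
    · intro t
      exact hconv_meas (fun s => f (t - s)) (hfc.comp (hcsub t))
    · intro t
      refine ae_of_all _ fun s => ?_
      calc ‖T s (f (t - s))‖ ≤ ‖T s‖ * ‖f (t - s)‖ := (T s).le_opNorm _
        _ ≤ (1 + w s) * ‖T s‖ * M :=
            mul_le_mul (hTub s) (hM _) (norm_nonneg _) (hbnn s)
    · exact hbound_int.mul_const M
    · refine ae_of_all _ fun s => ?_
      exact (T s).continuous.comp (hfc.comp (continuous_sub_right s))
  refine ⟨⟨K * M, hFb⟩, hFc, ?_⟩
  -- almost periodicity
  intro ε hε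
  set ε' : ℝ := ε / (K + 1) with hε'def
  have hε'0 : 0 < ε' := div_pos hε (by linarith)
  obtain ⟨l, hl, hAP⟩ := hfap ε' hε'0
  refine ⟨l, hl, fun t₀ ht₀ => ?_⟩
  obtain ⟨τ, hτI, hτl, hgC0, hgbd⟩ := hAP t₀ ht₀
  set g : EuclideanSpace ℝ (Fin n) → X := fun t => f (t + τ) - c • f t with hgdef
  obtain ⟨hgc, hgt⟩ := hgC0
  have hgb : ∀ t, ‖g t‖ ≤ M + ‖c‖ * M := by
    intro t
    calc ‖g t‖ ≤ ‖f (t + τ)‖ + ‖c • f t‖ := norm_sub_le _ _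
      _ ≤ M + ‖c‖ * M := by
          rw [norm_smul]
          exact add_le_add (hM _) (mul_le_mul_of_nonneg_left (hM t) (norm_nonneg c))
  have hGint : ∀ t, IntegrableOn (fun s => T s (g (t - s))) S := fun t =>
    hconv_int (fun u => g (t - u)) (M + ‖c‖ * M) (hgc.comp (hcsub t)) (fun u => hgb (t - u))
  have hGdef : ∀ t, F (t + τ) - c • F t = ∫ s in S, T s (g (t - s)) := by
    intro t
    have hi1 : IntegrableOn (fun s => T s (f (t + τ - s))) S :=
      hconv_int (fun u => f (t + τ - u)) M (hfc.comp (hcsub (t + τ))) (fun u => hM _)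
    have hi2 : IntegrableOn (fun s => T s (f (t - s))) S :=
      hconv_int (fun u => f (t - u)) M (hfc.comp (hcsub t)) (fun u => hM _)
    have hi2' : IntegrableOn (fun s => c • (T s) (f (t - s))) S volume := hi2.smul c
    have e1 : c • F t = ∫ s in S, c • T s (f (t - s)) := by
      rw [hFdef t]; exact (integral_smul c _).symm
    rw [hFdef (t + τ), e1, ← integral_sub hi1 hi2']
    refine integral_congr_ae (ae_of_all _ fun s => ?_)
    simp only [hgdef, map_sub, ContinuousLinearMap.map_smul, sub_add_eq_add_sub]
  -- pointwise estimate
  have hptw : ∀ t s, s ∈ S → ‖T s (g (t - s))‖ * ν t ≤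
      (1 + w s) * ‖T s‖ * (‖g (t - s)‖ * ν (t - s)) := by
    intro t s hs
    have hν' : ν t ≤ ν (t - s) * w s := by
      have h := hsub (t - s) s hs
      simpa using h
    calc ‖T s (g (t - s))‖ * ν t ≤ (‖T s‖ * ‖g (t - s)‖) * (ν (t - s) * w s) :=
          mul_le_mul ((T s).le_opNorm _) hν' (hν t).le
            (mul_nonneg (norm_nonneg _) (norm_nonneg _))
      _ = (‖T s‖ * w s) * (‖g (t - s)‖ * ν (t - s)) := by ring
      _ ≤ ((1 + w s) * ‖T s‖) * (‖g (t - s)‖ * ν (t - s)) := by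
          refine mul_le_mul_of_nonneg_right ?_
            (mul_nonneg (norm_nonneg _) (hν _).le)
          nlinarith [norm_nonneg (T s), hw s]
  have hGnorm : ∀ t, ‖F (t + τ) - c • F t‖ * ν t ≤
      ∫ s in S, ‖T s (g (t - s))‖ * ν t := by
    intro t
    rw [hGdef t, integral_mul_const]
    exact mul_le_mul_of_nonneg_right (norm_integral_le_integral_norm _) (hν t).le
  have hIle : ∀ t, (∫ s in S, ‖T s (g (t - s))‖ * ν t) ≤ K * ε' := by
    intro t
    have h1 : (∫ s in S, ‖T s (g (t - s))‖ * ν t) ≤ ∫ s in S, (1 + w s) * ‖T s‖ * ε' := by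
      refine integral_mono_of_nonneg
        (ae_of_all _ fun s => mul_nonneg (norm_nonneg _) (hν t).le)
        (hbound_int.mul_const ε') ?_
      refine (ae_restrict_iff' hSmeas).2 (ae_of_all _ fun s hs => ?_)
      calc ‖T s (g (t - s))‖ * ν t ≤ (1 + w s) * ‖T s‖ * (‖g (t - s)‖ * ν (t - s)) :=
            hptw t s hs
        _ ≤ (1 + w s) * ‖T s‖ * ε' :=
            mul_le_mul_of_nonneg_left (hgbd (t - s)) (hbnn s)
    rw [integral_mul_const] at h1
    rw [integral_mul_const] at h1
    rw [integral_mul_const]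
    exact h1
  have hfinal : K * ε' ≤ ε := by
    have h2 : ε' * (K + 1) = ε := div_mul_cancel₀ _ (by linarith)
    nlinarith [hε'0.le]
  -- the tendsto part
  set L : Filter (EuclideanSpace ℝ (Fin n)) :=
    Filter.comap (fun t : EuclideanSpace ℝ (Fin n) => ‖t‖) Filter.atTop with hLdef
  have hLnorm : Tendsto (fun t : EuclideanSpace ℝ (Fin n) => ‖t‖) L atTop := tendsto_comap
  have hshift : ∀ s : EuclideanSpace ℝ (Fin n), Tendsto (fun t => t - s) L L := by
    intro s
    rw [hLdef, tendsto_comap_iff]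
    have h1 : Tendsto (fun t : EuclideanSpace ℝ (Fin n) => ‖t‖ + -‖s‖) L atTop :=
      tendsto_atTop_add_const_right L (-‖s‖) hLnorm
    refine tendsto_atTop_mono (fun t => ?_) h1
    simpa [Function.comp, sub_eq_add_neg] using norm_sub_norm_le t s
  have hItendsto : Tendsto (fun t => ∫ s in S, ‖T s (g (t - s))‖ * ν t) L (nhds 0) := by
    have h0 : (0 : ℝ) = ∫ s in S, (0 : ℝ) := by simp
    rw [h0]
    refine tendsto_integral_filter_of_dominated_convergence
      (bound := fun s => (1 + w s) * ‖T s‖ * ε') ?_ ?_ (hbound_int.mul_const ε') ?_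
    · refine Filter.Eventually.of_forall fun t => ?_
      exact ((hconv_meas (fun s => g (t - s)) (hgc.comp (hcsub t))).norm).mul_const (ν t)
    · refine Filter.Eventually.of_forall fun t => ?_
      refine (ae_restrict_iff' hSmeas).2 (ae_of_all _ fun s hs => ?_)
      rw [Real.norm_of_nonneg (mul_nonneg (norm_nonneg _) (hν t).le)]
      exact ((hptw t s hs).trans
        (mul_le_mul_of_nonneg_left (hgbd (t - s)) (hbnn s)))
    · refine (ae_restrict_iff' hSmeas).2 (ae_of_all _ fun s hs => ?_)
      have hφ : Tendsto (fun t => ‖g (t - s)‖ * ν (t - s)) L (nhds 0) :=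
        hgt.comp (hshift s)
      have hcm : Tendsto (fun t => (1 + w s) * ‖T s‖ * (‖g (t - s)‖ * ν (t - s))) L
          (nhds 0) := by
        have := hφ.const_mul ((1 + w s) * ‖T s‖)
        simpa using this
      exact squeeze_zero (fun t => mul_nonneg (norm_nonneg _) (hν t).le)
        (fun t => hptw t s hs) hcm
  have hGtendsto : Tendsto (fun t => ‖F (t + τ) - c • F t‖ * ν t) L (nhds 0) :=
    squeeze_zero (fun t => mul_nonneg (norm_nonneg _) (hν t).le) hGnorm hItendsto
  refine ⟨τ, hτI, hτl, ⟨?_, hGtendsto⟩, fun t => (hGnorm t).trans ((hIle t).trans hfinal)⟩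
  exact (hFc.comp (continuous_add_right τ)).sub (hFc.const_smul c)
end
end

section
/- Let ∅ ≠ I ⊆ ℝⁿ, let X, Y be complex Banach spaces, let 𝓑 be a nonempty collection of nonempty subsets of X whose union is X, let R_X be a nonempty collection of sequences in ℝⁿ × X such that t + b(l) ∈ I for all t ∈ I, (b;x) ∈ R_X, l ∈ ℕ, and such that every subsequence of a sequence belonging to R_X also belongs to R_X; for each B ∈ 𝓑 and (b;x) ∈ R_X let L(B;(b;x)) be a collection of subsets of B containing all singletons {x}, x ∈ B, and assume L(B;(b';x')) = L(B;(b;x)) for every subsequence (b';x') of (b;x). Let 𝒫 = (P,d) be a complete metric space where P is a set of functions from I to Y containing the zero function, P is closed under addition and scalar multiplication, and d is translation invariant, i.e., d(f+g, h+g) = d(f,h) whenever f, h, f+g, h+g ∈ P. Suppose that for each j ∈ ℕ the function F_j : I × X → Y is (R_X,𝓑,𝒫,L)-multi-almost periodic of type 1, and that F : I × X → Y satisfies: for every B ∈ 𝓑, every sequence ((b_k;x_k)) ∈ R_X and every B' ∈ L(B;(b;x)), the functions F_i(·+b_l; x+x_l) − F(·+b_l; x+x_l) belong to P for all i, l ∈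 ℕ and x ∈ B', and lim_{(i,l)→∞} sup_{x∈B'} ‖F_i(·+b_l; x+x_l) − F(·+b_l; x+x_l)‖_P = 0 (double limit). Then F is (R_X,𝓑,𝒫,L)-multi-almost periodic of type 1. -/
noncomputable section

/-- `d` is a metric on the set `P` of functions. -/
def IsMetricOn {α Y : Type*} (P : Set (α → Y)) (d : (α → Y) → (α → Y) → ℝ) : Prop :=
  (∀ f ∈ P, d f f = 0) ∧ (∀ f ∈ P, ∀ g ∈ P, d f g = 0 → f = g) ∧
    (∀ f ∈ P, ∀ g ∈ P, d f g = d g f) ∧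
    (∀ f ∈ P, ∀ g ∈ P, ∀ h ∈ P, d f h ≤ d f g + d g h)

/-- `(R_X,𝓑,𝒫,L)`-multi-almost periodicity of type 1 of `F : I × X → Y`: besides the
memberships `F(·+b_{k_l}; x+x_{k_l}) − F*(·;x) ∈ P` and the limit condition, one also
requires `F(·+b_{k_l}; x+x_{k_l}) ∈ P` and `F*(·;x) ∈ P`. -/
def MultiAPX1 {n : ℕ} {X Y : Type*} [AddCommGroup X] [SubtractionMonoid Y]
    (I : Set (EuclideanSpace ℝ (Fin n)))
    (RX : Set (ℕ → EuclideanSpace ℝ (Fin n) × X))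
    (𝓑 : Set (Set X))
    (L : Set X → (ℕ → EuclideanSpace ℝ (Fin n) × X) → Set (Set X))
    (P : Set (↥I → Y)) (d : (↥I → Y) → (↥I → Y) → ℝ)
    (hR : ∀ b ∈ RX, ∀ l : ℕ, ∀ t ∈ I, t + (b l).1 ∈ I)
    (F : ↥I → X → Y) : Prop :=
  ∀ B ∈ 𝓑, ∀ b, ∀ hb : b ∈ RX, ∃ k : ℕ → ℕ, StrictMono k ∧ ∃ Fs : ↥I → X → Y,
    (∀ l : ℕ, ∀ x ∈ B,
      (fun t : ↥I =>
        F ⟨(t : EuclideanSpace ℝ (Fin n)) + (b (k l)).1, hR b hb (k l) t t.2⟩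
          (x + (b (k l)).2)) ∈ P ∧
      (fun t : ↥I => Fs t x) ∈ P ∧
      (fun t : ↥I =>
        F ⟨(t : EuclideanSpace ℝ (Fin n)) + (b (k l)).1, hR b hb (k l) t t.2⟩
          (x + (b (k l)).2) - Fs t x) ∈ P) ∧
    (∀ B' ∈ L B b, ∀ ε : ℝ, 0 < ε → ∃ N : ℕ, ∀ l ≥ N, ∀ x ∈ B',
      d (fun t : ↥I =>
        F ⟨(t : EuclideanSpace ℝ (Fin n)) + (b (k l)).1, hR b hb (k l) t t.2⟩
          (x + (b (k l)).2) - Fs t x) 0 ≤ ε)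

/-- Shift of a two-variable function along an element `c = (τ, ξ)`. -/
def shiftF {n : ℕ} {X Y : Type*} [Add X] {I : Set (EuclideanSpace ℝ (Fin n))}
    (G : ↥I → X → Y) (c : EuclideanSpace ℝ (Fin n) × X)
    (hc : ∀ t ∈ I, t + c.1 ∈ I) (x : X) : ↥I → Y :=
  fun t => G ⟨(t : EuclideanSpace ℝ (Fin n)) + c.1, hc t t.2⟩ (x + c.2)

/-- Recursive chain construction. -/
theorem exists_chain {α : Type*} {Q : ℕ → α → Prop} {R : ℕ → α → α → Prop}
    (h0 : ∃ a, Q 0 a) (hstep : ∀ j a, Q j a → ∃ a', Q (j + 1) a' ∧ R j a a') :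
    ∃ f : ℕ → α, (∀ j, Q j (f j)) ∧ ∀ j, R j (f j) (f (j + 1)) := by
  obtain ⟨a0, ha0⟩ := h0
  choose g hg1 hg2 using hstep
  let f : ∀ j : ℕ, {a : α // Q j a} :=
    fun j => Nat.rec ⟨a0, ha0⟩ (fun j p => ⟨g j p.1 p.2, hg1 j p.1 p.2⟩) j
  exact ⟨fun j => (f j).1, fun j => (f j).2, fun j => hg2 j (f j).1 (f j).2⟩

/-- Convergence of a sequence of `(R_X,𝓑,𝒫,L)`-multi-almost periodic functions of type 1
in the complete metric space `𝒫` yields an `(R_X,𝓑,𝒫,L)`-multi-almost periodic limit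
function of type 1. -/
theorem stmt6 {n : ℕ} {X Y : Type*}
    [NormedAddCommGroup X] [NormedSpace ℂ X] [CompleteSpace X]
    [NormedAddCommGroup Y] [NormedSpace ℂ Y] [CompleteSpace Y]
    (I : Set (EuclideanSpace ℝ (Fin n))) (hI : I.Nonempty)
    (RX : Set (ℕ → EuclideanSpace ℝ (Fin n) × X)) (hRXne : RX.Nonempty)
    (hR : ∀ b ∈ RX, ∀ l : ℕ, ∀ t ∈ I, t + (b l).1 ∈ I)
    (hRXsub : ∀ b ∈ RX, ∀ φ : ℕ → ℕ, StrictMono φ → (b ∘ φ) ∈ RX)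
    (𝓑 : Set (Set X)) (h𝓑ne : 𝓑.Nonempty) (h𝓑 : ∀ B ∈ 𝓑, B.Nonempty)
    (h𝓑union : ∀ x : X, ∃ B ∈ 𝓑, x ∈ B)
    (L : Set X → (ℕ → EuclideanSpace ℝ (Fin n) × X) → Set (Set X))
    (hL : ∀ B ∈ 𝓑, ∀ b ∈ RX, (∀ B' ∈ L B b, B' ⊆ B) ∧ ∀ x ∈ B, {x} ∈ L B b)
    (hLsub : ∀ B : Set X, ∀ b : ℕ → EuclideanSpace ℝ (Fin n) × X, ∀ φ : ℕ → ℕ,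
      StrictMono φ → L B (b ∘ φ) = L B b)
    (P : Set (↥I → Y)) (d : (↥I → Y) → (↥I → Y) → ℝ)
    (hP0 : (0 : ↥I → Y) ∈ P) (hPd : IsMetricOn P d)
    (hPadd : ∀ f ∈ P, ∀ g ∈ P, f + g ∈ P)
    (hPsmul : ∀ c : ℂ, ∀ f ∈ P, c • f ∈ P)
    (hdtrans : ∀ f g h : ↥I → Y, f ∈ P → h ∈ P → f + g ∈ P → h + g ∈ P →
      d (f + g) (h + g) = d f h)
    (hcomplete : ∀ u : ℕ → (↥I → Y), (∀ m, u m ∈ P) →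
      (∀ ε : ℝ, 0 < ε → ∃ N : ℕ, ∀ m ≥ N, ∀ m' ≥ N, d (u m) (u m') ≤ ε) →
      ∃ g ∈ P, ∀ ε : ℝ, 0 < ε → ∃ N : ℕ, ∀ m ≥ N, d (u m) g ≤ ε)
    (Fj : ℕ → ↥I → X → Y)
    (hFj : ∀ j : ℕ, MultiAPX1 I RX 𝓑 L P d hR (Fj j))
    (F : ↥I → X → Y)
    (hconv : ∀ B ∈ 𝓑, ∀ b, ∀ hb : b ∈ RX, ∀ B' ∈ L B b,
      (∀ i l : ℕ, ∀ x ∈ B',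
        (fun t : ↥I =>
          Fj i ⟨(t : EuclideanSpace ℝ (Fin n)) + (b l).1, hR b hb l t t.2⟩ (x + (b l).2) -
            F ⟨(t : EuclideanSpace ℝ (Fin n)) + (b l).1, hR b hb l t t.2⟩ (x + (b l).2)) ∈ P) ∧
      (∀ ε : ℝ, 0 < ε → ∃ N : ℕ, ∀ i ≥ N, ∀ l ≥ N, ∀ x ∈ B',
        d (fun t : ↥I =>
          Fj i ⟨(t : EuclideanSpace ℝ (Fin n)) + (b l).1, hR b hb l t t.2⟩ (x + (b l).2) -
            F ⟨(t : EuclideanSpace ℝ (Fin n)) + (b l).1, hR b hb l t t.2⟩ (x + (b l).2)) 0 ≤ ε)) :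
    MultiAPX1 I RX 𝓑 L P d hR F := by
  intro B hB b hb
  obtain ⟨drefl, dsep, dsymm, dtri⟩ := hPd
  have hbP : ∀ m : ℕ, ∀ t ∈ I, t + (b m).1 ∈ I := fun m => hR b hb m
  have hsing : ∀ x ∈ B, ({x} : Set X) ∈ L B b := (hL B hB b hb).2
  have hsubB : ∀ B' ∈ L B b, B' ⊆ B := (hL B hB b hb).1
  have hconvB' := hconv B hB b hb
  -- P is closed under differences
  have Psub : ∀ f ∈ P, ∀ g ∈ P, f - g ∈ P := by
    intro f hf g hg
    have e : f - g = f + (-1 : ℂ) • g := by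
      funext t; simp [sub_eq_add_neg]
    rw [e]
    exact hPadd f hf _ (hPsmul (-1) g hg)
  -- d f g = d (f - g) 0
  have dshift : ∀ f ∈ P, ∀ g ∈ P, d f g = d (f - g) 0 := by
    intro f hf g hg
    have e1 : (f - g) + g = f := sub_add_cancel f g
    have e2 : (0 : ↥I → Y) + g = g := zero_add g
    have h := hdtrans (f - g) g 0 (Psub f hf g hg) hP0
      (by rw [e1]; exact hf) (by rw [e2]; exact hg)
    rw [e1, e2] at h
    exact h
  -- one refinement step of the diagonal procedure
  have main : ∀ (j : ℕ) (ψ : ℕ → ℕ), StrictMono ψ → (b ∘ ψ) ∈ RX →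
      ∃ ψ' : ℕ → ℕ,
        (StrictMono ψ' ∧ (b ∘ ψ') ∈ RX ∧
          ∃ Fs : ↥I → X → Y,
            (∀ m : ℕ, ∀ x ∈ B,
              shiftF (Fj j) (b (ψ' m)) (hbP (ψ' m)) x ∈ P ∧
              (fun t => Fs t x) ∈ P ∧
              shiftF (Fj j) (b (ψ' m)) (hbP (ψ' m)) x - (fun t => Fs t x) ∈ P) ∧
            (∀ B' ∈ L B b, ∀ ε : ℝ, 0 < ε → ∃ N, ∀ m ≥ N, ∀ x ∈ B',
              d (shiftF (Fj j) (b (ψ' m)) (hbP (ψ' m)) x - fun t => Fs t x) 0 ≤ ε)) ∧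
        (∀ l, ∃ m, l ≤ m ∧ ψ' l = ψ m) := by
    intro j ψ hψ hψR
    obtain ⟨χ, hχ, Fs, h1, h2⟩ := hFj j B hB (b ∘ ψ) hψR
    rw [hLsub B b ψ hψ] at h2
    refine ⟨ψ ∘ χ, ⟨hψ.comp hχ, hRXsub (b ∘ ψ) hψR χ hχ, Fs, ?_, ?_⟩,
      fun l => ⟨χ l, hχ.le_apply, rfl⟩⟩
    · intro m x hx
      obtain ⟨a1, a2, a3⟩ := h1 m x hx
      exact ⟨a1, a2, a3⟩
    · intro B' hB' ε hε
      obtain ⟨N, hN⟩ := h2 B' hB' ε hε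
      exact ⟨N, fun m hm x hx => hN m hm x hx⟩
  -- build the chain of nested subsequences
  obtain ⟨Φ, hΦQ, hΦR⟩ := exists_chain
    (Q := fun j ψ' => StrictMono ψ' ∧ (b ∘ ψ') ∈ RX ∧
      ∃ Fs : ↥I → X → Y,
        (∀ m : ℕ, ∀ x ∈ B,
          shiftF (Fj j) (b (ψ' m)) (hbP (ψ' m)) x ∈ P ∧
          (fun t => Fs t x) ∈ P ∧
          shiftF (Fj j) (b (ψ' m)) (hbP (ψ' m)) x - (fun t => Fs t x) ∈ P) ∧
        (∀ B' ∈ L B b, ∀ ε : ℝ, 0 < ε → ∃ N, ∀ m ≥ N, ∀ x ∈ B',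
          d (shiftF (Fj j) (b (ψ' m)) (hbP (ψ' m)) x - fun t => Fs t x) 0 ≤ ε))
    (R := fun _ ψ ψ' => ∀ l, ∃ m, l ≤ m ∧ ψ' l = ψ m)
    (Exists.imp (fun _ h => h.1) (main 0 id strictMono_id hb))
    (fun j ψ hQ => main (j + 1) ψ hQ.1 hQ.2.1)
  -- transfer along the chain
  have diag : ∀ j i : ℕ, ∀ l, ∃ m, l ≤ m ∧ Φ (j + i) l = Φ j m := by
    intro j i
    induction i with
    | zero => exact fun l => ⟨l, le_rfl, rfl⟩
    | succ i ih =>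
      intro l
      obtain ⟨m₁, hm₁, he₁⟩ := hΦR (j + i) l
      obtain ⟨m, hm, he⟩ := ih m₁
      exact ⟨m, le_trans hm₁ hm, he₁.trans he⟩
  have diag' : ∀ j l : ℕ, j ≤ l → ∃ m, l ≤ m ∧ Φ l l = Φ j m := by
    intro j l hjl
    obtain ⟨i, rfl⟩ := Nat.exists_eq_add_of_le hjl
    exact diag j i (j + i)
  -- limit functions for each Fⱼ
  choose G hG using fun j => (hΦQ j).2.2
  -- membership of the translates of F
  have uP : ∀ l : ℕ, ∀ x ∈ B, shiftF F (b (Φ l l)) (hbP (Φ l l)) x ∈ P := by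
    intro l x hx
    obtain ⟨m, _, he⟩ := diag' 0 l (Nat.zero_le l)
    rw [he]
    have h1 : shiftF (Fj 0) (b (Φ 0 m)) (hbP (Φ 0 m)) x ∈ P := ((hG 0).1 m x hx).1
    have h2 : shiftF (Fj 0) (b (Φ 0 m)) (hbP (Φ 0 m)) x
        - shiftF F (b (Φ 0 m)) (hbP (Φ 0 m)) x ∈ P :=
      (hconvB' {x} (hsing x hx)).1 0 (Φ 0 m) x rfl
    have h3 : shiftF F (b (Φ 0 m)) (hbP (Φ 0 m)) x =
        shiftF (Fj 0) (b (Φ 0 m)) (hbP (Φ 0 m)) x -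
          (shiftF (Fj 0) (b (Φ 0 m)) (hbP (Φ 0 m)) x
            - shiftF F (b (Φ 0 m)) (hbP (Φ 0 m)) x) := by
      rw [sub_sub_cancel]
    rw [h3]
    exact Psub _ h1 _ h2
  -- the master approximation estimate
  have master : ∀ B' ∈ L B b, ∀ ε : ℝ, 0 < ε → ∃ i N : ℕ, ∀ l, N ≤ l → ∀ x ∈ B',
      (fun t => G i t x) ∈ P ∧
      d (shiftF F (b (Φ l l)) (hbP (Φ l l)) x) (fun t => G i t x) ≤ ε + ε := by
    intro B' hB' ε hε
    obtain ⟨N₁, hN₁⟩ := (hconvB' B' hB').2 ε hε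
    obtain ⟨N₂, hN₂⟩ := (hG N₁).2 B' hB' ε hε
    refine ⟨N₁, max N₁ N₂, ?_⟩
    intro l hl x hx
    have hxB : x ∈ B := hsubB B' hB' hx
    obtain ⟨m, hlm, he⟩ := diag' N₁ l (le_trans (le_max_left _ _) hl)
    rw [he]
    have hw := (hG N₁).1 m x hxB
    have hwP : shiftF (Fj N₁) (b (Φ N₁ m)) (hbP (Φ N₁ m)) x ∈ P := hw.1
    have hGiP : (fun t => G N₁ t x) ∈ P := hw.2.1
    have huP : shiftF F (b (Φ N₁ m)) (hbP (Φ N₁ m)) x ∈ P := by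
      have := uP l x hxB; rwa [he] at this
    refine ⟨hGiP, ?_⟩
    have hmN₂ : N₂ ≤ m := le_trans (le_trans (le_max_right _ _) hl) hlm
    have d1 : d (shiftF (Fj N₁) (b (Φ N₁ m)) (hbP (Φ N₁ m)) x) (fun t => G N₁ t x) ≤ ε := by
      have h := hN₂ m hmN₂ x hx
      rw [dshift _ hwP _ hGiP]
      exact h
    have hm1 : N₁ ≤ Φ N₁ m :=
      le_trans (le_trans (le_max_left N₁ N₂) (le_trans hl hlm)) (hΦQ N₁).1.le_apply
    have d2 : d (shiftF F (b (Φ N₁ m)) (hbP (Φ N₁ m)) x)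
        (shiftF (Fj N₁) (b (Φ N₁ m)) (hbP (Φ N₁ m)) x) ≤ ε := by
      have h3 := hN₁ N₁ le_rfl (Φ N₁ m) hm1 x hx
      rw [dsymm _ huP _ hwP, dshift _ hwP _ huP]
      exact h3
    calc d (shiftF F (b (Φ N₁ m)) (hbP (Φ N₁ m)) x) (fun t => G N₁ t x)
        ≤ d (shiftF F (b (Φ N₁ m)) (hbP (Φ N₁ m)) x)
            (shiftF (Fj N₁) (b (Φ N₁ m)) (hbP (Φ N₁ m)) x)
          + d (shiftF (Fj N₁) (b (Φ N₁ m)) (hbP (Φ N₁ m)) x) (fun t => G N₁ t x) :=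
          dtri _ huP _ hwP _ hGiP
      _ ≤ ε + ε := add_le_add d2 d1
  -- the limit function of F along the diagonal, for each x ∈ B
  have hlimit : ∀ x ∈ B, ∃ gx ∈ P, ∀ ε : ℝ, 0 < ε → ∃ N : ℕ, ∀ m ≥ N,
      d (shiftF F (b (Φ m m)) (hbP (Φ m m)) x) gx ≤ ε := by
    intro x hx
    refine hcomplete (fun m => shiftF F (b (Φ m m)) (hbP (Φ m m)) x)
      (fun m => uP m x hx) ?_
    intro ε hε
    obtain ⟨i, N, hN⟩ := master {x} (hsing x hx) (ε / 4) (by positivity)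
    refine ⟨N, fun m hm m' hm' => ?_⟩
    obtain ⟨hGiP, hd⟩ := hN m hm x rfl
    obtain ⟨-, hd'⟩ := hN m' hm' x rfl
    have hu := uP m x hx
    have hu' := uP m' x hx
    calc d (shiftF F (b (Φ m m)) (hbP (Φ m m)) x) (shiftF F (b (Φ m' m')) (hbP (Φ m' m')) x)
        ≤ d (shiftF F (b (Φ m m)) (hbP (Φ m m)) x) (fun t => G i t x)
          + d (fun t => G i t x) (shiftF F (b (Φ m' m')) (hbP (Φ m' m')) x) :=
          dtri _ hu _ hGiP _ hu'
      _ = d (shiftF F (b (Φ m m)) (hbP (Φ m m)) x) (fun t => G i t x)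
          + d (shiftF F (b (Φ m' m')) (hbP (Φ m' m')) x) (fun t => G i t x) := by
          rw [dsymm _ hGiP _ hu']
      _ ≤ (ε / 4 + ε / 4) + (ε / 4 + ε / 4) := add_le_add hd hd'
      _ ≤ ε := by linarith
  choose! g hgP hglim using hlimit
  -- the final convergence statement
  have hcv : ∀ B' ∈ L B b, ∀ ε : ℝ, 0 < ε → ∃ N : ℕ, ∀ l ≥ N, ∀ x ∈ B',
      d (shiftF F (b (Φ l l)) (hbP (Φ l l)) x - fun t => g x t) 0 ≤ ε := by
    intro B' hB' ε hε
    obtain ⟨i, N, hN⟩ := master B' hB' (ε / 5) (by positivity)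
    refine ⟨N, fun l hl x hx => ?_⟩
    have hxB : x ∈ B := hsubB B' hB' hx
    obtain ⟨hGiP, hd⟩ := hN l hl x hx
    obtain ⟨N₃, hN₃⟩ := hglim x hxB (ε / 5) (by positivity)
    obtain ⟨-, hdm⟩ := hN (max N N₃) (le_max_left _ _) x hx
    have hdm3 := hN₃ (max N N₃) (le_max_right _ _)
    have hu := uP l x hxB
    have hum := uP (max N N₃) x hxB
    have hgxP : g x ∈ P := hgP x hxB
    rw [← dshift _ hu (fun t => g x t) hgxP]
    calc d (shiftF F (b (Φ l l)) (hbP (Φ l l)) x) (fun t => g x t)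
        ≤ d (shiftF F (b (Φ l l)) (hbP (Φ l l)) x) (fun t => G i t x)
          + d (fun t => G i t x) (fun t => g x t) := dtri _ hu _ hGiP _ hgxP
      _ ≤ d (shiftF F (b (Φ l l)) (hbP (Φ l l)) x) (fun t => G i t x)
          + (d (fun t => G i t x)
              (shiftF F (b (Φ (max N N₃) (max N N₃))) (hbP (Φ (max N N₃) (max N N₃))) x)
            + d (shiftF F (b (Φ (max N N₃) (max N N₃)))
                (hbP (Φ (max N N₃) (max N N₃))) x) (fun t => g x t)) := by
          exact add_le_add_right (dtri _ hGiP _ hum _ hgxP) _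
      _ = d (shiftF F (b (Φ l l)) (hbP (Φ l l)) x) (fun t => G i t x)
          + (d (shiftF F (b (Φ (max N N₃) (max N N₃)))
                (hbP (Φ (max N N₃) (max N N₃))) x) (fun t => G i t x)
            + d (shiftF F (b (Φ (max N N₃) (max N N₃)))
                (hbP (Φ (max N N₃) (max N N₃))) x) (fun t => g x t)) := by
          rw [dsymm _ hGiP _ hum]
      _ ≤ (ε / 5 + ε / 5) + ((ε / 5 + ε / 5) + ε / 5) :=
          add_le_add hd (add_le_add hdm hdm3)
      _ ≤ ε := by linarith
  -- the diagonal subsequence is strictly monotone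
  have hkmono : StrictMono (fun l : ℕ => Φ l l) := by
    apply strictMono_nat_of_lt_succ
    intro l
    obtain ⟨m, hm, he⟩ := hΦR l (l + 1)
    rw [he]
    exact (hΦQ l).1 (Nat.lt_of_lt_of_le (Nat.lt_succ_self l) hm)
  exact ⟨fun l => Φ l l, hkmono, fun t x => g x t,
    fun l x hx => ⟨uP l x hx, hgP x hx, Psub _ (uP l x hx) _ (hgP x hx)⟩, hcv⟩
end
end

section
/- Let ∅ ≠ I' ⊆ ℝⁿ and ∅ ≠ I ⊆ ℝⁿ with I + I' ⊆ I and τ + I = I for every τ ∈ I', let X, Y be complex Banach spaces, let 𝓑 be a nonempty collection of nonempty subsets of X whose union is X, and let ρ be a binary relation on Y such that the range of F is contained in the domain of ρ and ρ(y) is a singleton for every y in the range of F. Let 𝒫 = (P,d) be a metric space where P is a set of functions from I to Y containing 0, P is closed under addition and scalar multiplication, and d is translation invariant (d(f+g,h+g) = d(f,h) whenever f,h,f+g,h+g ∈ P), and suppose the following condition (P) holds: 𝒫₁ = (P₁,d₁) is a metric space with P₁ a set of functions from I to Y containing 0, there exists c ∈ (0,∞) such that for every f ∈ P and τ ∈ I'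 the function f(·−τ) belongs to P₁ and ‖f(·−τ)‖_{P₁} ≤ c‖f‖_P. If F : I × X → Y is Bohr (𝓑,I',ρ,𝒫)-almost periodic, then I + (I'−I') ⊆ I and F is Bohr (𝓑,I'−I',𝐈,𝒫₁)-almost periodic, where 𝐈 denotes the identity relation on Y. -/
noncomputable section

/-- Bohr `(𝓑,I',ρ,𝒫)`-almost periodicity of `F : I × X → Y`, where `𝒫 = (P,d)` is a metric
space of functions from `I` to `Y` with `‖f‖_P := d(f,0)` and `ρ` is a binary relation
on `Y`. -/
def BohrAP {n : ℕ} {X Y : Type*} [SubtractionMonoid Y]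
    (I I' : Set (EuclideanSpace ℝ (Fin n)))
    (𝓑 : Set (Set X)) (ρ : Y → Y → Prop)
    (P : Set (↥I → Y)) (d : (↥I → Y) → (↥I → Y) → ℝ)
    (hII' : ∀ τ ∈ I', ∀ t ∈ I, t + τ ∈ I)
    (F : ↥I → X → Y) : Prop :=
  ∀ B ∈ 𝓑, ∀ ε : ℝ, 0 < ε → ∃ l : ℝ, 0 < l ∧ ∀ t₀ ∈ I',
    ∃ τ, ∃ hτ : τ ∈ I', ‖τ - t₀‖ ≤ l ∧
      ∃ y : ↥I → X → Y,
        (∀ t : ↥I, ∀ x ∈ B, ρ (F t x) (y t x)) ∧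
        (∀ x ∈ B,
          (fun t : ↥I =>
            F ⟨(t : EuclideanSpace ℝ (Fin n)) + τ, hII' τ hτ t t.2⟩ x - y t x) ∈ P) ∧
        (∀ x ∈ B,
          d (fun t : ↥I =>
            F ⟨(t : EuclideanSpace ℝ (Fin n)) + τ, hII' τ hτ t t.2⟩ x - y t x) 0 ≤ ε)

/-- If `F` is Bohr `(𝓑,I',ρ,𝒫)`-almost periodic, `τ + I = I` for every `τ ∈ I'`, `ρ` is
single-valued on the range of `F`, `P` has a linear structure with translation invariant
metric and condition (P) holds, then `I + (I'−I') ⊆ I` and `F` is Bohr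
`(𝓑,I'−I',𝐈,𝒫₁)`-almost periodic. -/
theorem stmt8 {n : ℕ} {X Y : Type*}
    [NormedAddCommGroup X] [NormedSpace ℂ X] [CompleteSpace X]
    [NormedAddCommGroup Y] [NormedSpace ℂ Y] [CompleteSpace Y]
    (I I' : Set (EuclideanSpace ℝ (Fin n))) (hI : I.Nonempty) (hI' : I'.Nonempty)
    (hII' : ∀ τ ∈ I', ∀ t ∈ I, t + τ ∈ I)
    (hτI : ∀ τ ∈ I', (fun t => t + τ) '' I = I)
    (𝓑 : Set (Set X)) (h𝓑ne : 𝓑.Nonempty) (h𝓑 : ∀ B ∈ 𝓑, B.Nonempty)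
    (h𝓑union : ∀ x : X, ∃ B ∈ 𝓑, x ∈ B)
    (ρ : Y → Y → Prop) (F : ↥I → X → Y)
    (hρ : ∀ (t : ↥I) (x : X), ∃! y : Y, ρ (F t x) y)
    (P : Set (↥I → Y)) (d : (↥I → Y) → (↥I → Y) → ℝ)
    (hP0 : (0 : ↥I → Y) ∈ P) (hPd : IsMetricOn P d)
    (hPadd : ∀ f ∈ P, ∀ g ∈ P, f + g ∈ P)
    (hPsmul : ∀ c : ℂ, ∀ f ∈ P, c • f ∈ P)
    (hdtrans : ∀ f g h : ↥I → Y, f ∈ P → h ∈ P → f + g ∈ P → h + g ∈ P →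
      d (f + g) (h + g) = d f h)
    (P₁ : Set (↥I → Y)) (d₁ : (↥I → Y) → (↥I → Y) → ℝ)
    (hP₁0 : (0 : ↥I → Y) ∈ P₁) (hP₁d : IsMetricOn P₁ d₁)
    (c : ℝ) (hc : 0 < c)
    (hcondP : ∀ f ∈ P, ∀ τ ∈ I', ∀ hs : ∀ t ∈ I, t - τ ∈ I,
      (fun t : ↥I => f ⟨(t : EuclideanSpace ℝ (Fin n)) - τ, hs t t.2⟩) ∈ P₁ ∧
      d₁ (fun t : ↥I => f ⟨(t : EuclideanSpace ℝ (Fin n)) - τ, hs t t.2⟩) 0 ≤ c * d f 0)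
    (hF : BohrAP I I' 𝓑 ρ P d hII' F) :
    (∀ t ∈ I, ∀ τ₁ ∈ I', ∀ τ₂ ∈ I', t + (τ₁ - τ₂) ∈ I) ∧
    ∃ h : ∀ s ∈ {s : EuclideanSpace ℝ (Fin n) | ∃ τ₁ ∈ I', ∃ τ₂ ∈ I', s = τ₁ - τ₂},
        ∀ t ∈ I, t + s ∈ I,
      BohrAP I {s : EuclideanSpace ℝ (Fin n) | ∃ τ₁ ∈ I', ∃ τ₂ ∈ I', s = τ₁ - τ₂}
        𝓑 (fun y₁ y₂ => y₁ = y₂) P₁ d₁ h F := by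

  have hsub : ∀ τ ∈ I', ∀ t ∈ I, t - τ ∈ I := by
    intro τ hτ t ht
    rw [← hτI τ hτ] at ht
    obtain ⟨u, hu, huτ⟩ := ht
    have he : t - τ = u := (eq_sub_of_add_eq huτ).symm
    rwa [he]
  have part1 : ∀ t ∈ I, ∀ τ₁ ∈ I', ∀ τ₂ ∈ I', t + (τ₁ - τ₂) ∈ I := by
    intro t ht τ₁ hτ₁ τ₂ hτ₂
    have h1 : t + τ₁ ∈ I := hII' τ₁ hτ₁ t ht
    have h2 := hsub τ₂ hτ₂ _ h1
    have he : t + (τ₁ - τ₂) = t + τ₁ - τ₂ := by abel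
    rwa [he]
  have hS : ∀ s ∈ {s : EuclideanSpace ℝ (Fin n) | ∃ τ₁ ∈ I', ∃ τ₂ ∈ I', s = τ₁ - τ₂},
      ∀ t ∈ I, t + s ∈ I := by
    rintro s ⟨τ₁, hτ₁, τ₂, hτ₂, rfl⟩ t ht
    exact part1 t ht τ₁ hτ₁ τ₂ hτ₂
  refine ⟨part1, hS, ?_⟩
  intro B hB ε hε
  have hε' : (0:ℝ) < ε / (2 * c) := by positivity
  obtain ⟨l, hl, H⟩ := hF B hB (ε / (2 * c)) hε'
  refine ⟨2 * l, by linarith, ?_⟩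
  rintro s₀ ⟨τ₁, hτ₁, τ₂, hτ₂, rfl⟩
  obtain ⟨τ, hτ, hτn, y, hy, hyP, hyd⟩ := H τ₁ hτ₁
  obtain ⟨τ', hτ', hτ'n, y', hy', hy'P, hy'd⟩ := H τ₂ hτ₂
  have hsmem : τ - τ' ∈ {s : EuclideanSpace ℝ (Fin n) | ∃ τ₁ ∈ I', ∃ τ₂ ∈ I', s = τ₁ - τ₂} :=
    ⟨τ, hτ, τ', hτ', rfl⟩
  refine ⟨τ - τ', hsmem, ?_, F, fun t x _ => rfl, ?_, ?_⟩
  · have he : τ - τ' - (τ₁ - τ₂) = (τ - τ₁) + (τ₂ - τ') := by abel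
    calc ‖τ - τ' - (τ₁ - τ₂)‖ = ‖(τ - τ₁) + (τ₂ - τ')‖ := by rw [he]
      _ ≤ ‖τ - τ₁‖ + ‖τ₂ - τ'‖ := norm_add_le _ _
      _ ≤ l + l := add_le_add hτn (by rw [norm_sub_rev]; exact hτ'n)
      _ = 2 * l := by ring
  all_goals {
    have main : ∀ x ∈ B,
        (fun t : ↥I => F ⟨(t : EuclideanSpace ℝ (Fin n)) + (τ - τ'),
            hS (τ - τ') hsmem t t.2⟩ x - F t x) ∈ P₁ ∧
        d₁ (fun t : ↥I => F ⟨(t : EuclideanSpace ℝ (Fin n)) + (τ - τ'),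
            hS (τ - τ') hsmem t t.2⟩ x - F t x) 0 ≤ ε := by
      intro x hx
      set f : ↥I → Y := fun t => F ⟨(t : EuclideanSpace ℝ (Fin n)) + τ, hII' τ hτ t t.2⟩ x - y t x with hfdef
      set g : ↥I → Y := fun t => F ⟨(t : EuclideanSpace ℝ (Fin n)) + τ', hII' τ' hτ' t t.2⟩ x - y' t x with hgdef
      have hf : f ∈ P := hyP x hx
      have hg : g ∈ P := hy'P x hx
      have hfg : f + (-1:ℂ) • g ∈ P := hPadd _ hf _ (hPsmul _ _ hg)
      have heq : (f + (-1:ℂ) • g) + g = f := by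
        funext t
        show f t + (-1:ℂ) • g t + g t = f t
        rw [neg_one_smul]
        abel
      have hd : d (f + (-1:ℂ) • g) 0 = d f g := by
        have h' := hdtrans (f + (-1:ℂ) • g) g 0 hfg hP0
          (by rw [heq]; exact hf) (by rw [zero_add]; exact hg)
        rw [heq, zero_add] at h'
        exact h'.symm
      have hdfg : d (f + (-1:ℂ) • g) 0 ≤ ε / c := by
        rw [hd]
        calc d f g ≤ d f 0 + d 0 g := hPd.2.2.2 f hf 0 hP0 g hg
          _ = d f 0 + d g 0 := by rw [hPd.2.2.1 0 hP0 g hg]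
          _ ≤ ε / (2*c) + ε / (2*c) := add_le_add (hyd x hx) (hy'd x hx)
          _ = ε / c := by field_simp; ring
      obtain ⟨hmem, hbd⟩ := hcondP (f + (-1:ℂ) • g) hfg τ' hτ' (hsub τ' hτ')
      have hfun : (fun t : ↥I => (f + (-1:ℂ) • g) ⟨(t : EuclideanSpace ℝ (Fin n)) - τ', hsub τ' hτ' t t.2⟩) =
          (fun t : ↥I => F ⟨(t : EuclideanSpace ℝ (Fin n)) + (τ - τ'),
            hS (τ - τ') hsmem t t.2⟩ x - F t x) := by
        funext t
        have hu : ((t : EuclideanSpace ℝ (Fin n)) - τ') ∈ I := hsub τ' hτ' t t.2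
        have e1 : (⟨((⟨(t : EuclideanSpace ℝ (Fin n)) - τ', hu⟩ : ↥I) : EuclideanSpace ℝ (Fin n)) + τ,
            hII' τ hτ _ hu⟩ : ↥I) =
            ⟨(t : EuclideanSpace ℝ (Fin n)) + (τ - τ'), hS (τ - τ') hsmem t t.2⟩ :=
          Subtype.ext (by show (t : EuclideanSpace ℝ (Fin n)) - τ' + τ = _; abel)
        have e2 : (⟨((⟨(t : EuclideanSpace ℝ (Fin n)) - τ', hu⟩ : ↥I) : EuclideanSpace ℝ (Fin n)) + τ',
            hII' τ' hτ' _ hu⟩ : ↥I) = t :=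
          Subtype.ext (by show (t : EuclideanSpace ℝ (Fin n)) - τ' + τ' = _; abel)
        have hyy' : y ⟨(t : EuclideanSpace ℝ (Fin n)) - τ', hu⟩ x = y' ⟨(t : EuclideanSpace ℝ (Fin n)) - τ', hu⟩ x :=
          (hρ _ x).unique (hy _ x hx) (hy' _ x hx)
        show F ⟨((⟨(t : EuclideanSpace ℝ (Fin n)) - τ', hu⟩ : ↥I) : EuclideanSpace ℝ (Fin n)) + τ,
              hII' τ hτ _ hu⟩ x - y ⟨(t : EuclideanSpace ℝ (Fin n)) - τ', hu⟩ x
            + (-1:ℂ) • (F ⟨((⟨(t : EuclideanSpace ℝ (Fin n)) - τ', hu⟩ : ↥I) : EuclideanSpace ℝ (Fin n)) + τ',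
              hII' τ' hτ' _ hu⟩ x - y' ⟨(t : EuclideanSpace ℝ (Fin n)) - τ', hu⟩ x)
            = F ⟨(t : EuclideanSpace ℝ (Fin n)) + (τ - τ'), hS (τ - τ') hsmem t t.2⟩ x - F t x
        rw [neg_one_smul, e1, e2, hyy']
        abel
      rw [hfun] at hmem hbd
      refine ⟨hmem, hbd.trans ?_⟩
      calc c * d (f + (-1:ℂ) • g) 0 ≤ c * (ε / c) := by
            exact mul_le_mul_of_nonneg_left hdfg hc.le
        _ = ε := by field_simp
    first
      | exact fun x hx => (main x hx).1
      | exact fun x hx => (main x hx).2 }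
end
end

section
/- Let ∅ ≠ I' ⊆ ℝⁿ, let X, Y be complex Banach spaces, let 𝓑 be a nonempty collection of nonempty subsets of X whose union is X, and let ρ be a binary relation on Y such that the range of F is contained in the domain of ρ and ρ(y) is a singleton for every y in the range of F. Let 𝒫 = (P,d) be a metric space where P is a set of functions from ℝⁿ to Y containing 0, P is closed under addition and scalar multiplication, and d is translation invariant (d(f+g,h+g) = d(f,h) whenever f,h,f+g,h+g ∈ P), and suppose condition (P) holds: 𝒫₁ = (P₁,d₁) is a metric space with P₁ a set of functions from ℝⁿ to Y containing 0, and there exists c ∈ (0,∞) such that for every f ∈ P and τ ∈ I' the function f(·−τ) belongs to P₁ and ‖f(·−τ)‖_{P₁} ≤ c‖f‖_P. If F : ℝⁿ × X → Y is Bohr (𝓑,I',ρ,𝒫)-almost periodic, then F is Bohr (𝓑,I'−I',𝐈,𝒫₁)-almost periodic, where 𝐈 denotes the identity relation on Y. -/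
noncomputable section

/-- Bohr `(𝓑,I',ρ,𝒫)`-almost periodicity of `F : ℝⁿ × X → Y`, where `𝒫 = (P,d)` is a
metric space of functions from `ℝⁿ` to `Y` with `‖f‖_P := d(f,0)`. -/
def BohrAPFull {n : ℕ} {X Y : Type*} [SubtractionMonoid Y]
    (I' : Set (EuclideanSpace ℝ (Fin n)))
    (𝓑 : Set (Set X)) (ρ : Y → Y → Prop)
    (P : Set (EuclideanSpace ℝ (Fin n) → Y))
    (d : (EuclideanSpace ℝ (Fin n) → Y) → (EuclideanSpace ℝ (Fin n) → Y) → ℝ)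
    (F : EuclideanSpace ℝ (Fin n) → X → Y) : Prop :=
  ∀ B ∈ 𝓑, ∀ ε : ℝ, 0 < ε → ∃ l : ℝ, 0 < l ∧ ∀ t₀ ∈ I', ∃ τ ∈ I', ‖τ - t₀‖ ≤ l ∧
    ∃ y : EuclideanSpace ℝ (Fin n) → X → Y,
      (∀ t, ∀ x ∈ B, ρ (F t x) (y t x)) ∧
      (∀ x ∈ B, (fun t => F (t + τ) x - y t x) ∈ P) ∧
      (∀ x ∈ B, d (fun t => F (t + τ) x - y t x) 0 ≤ ε)

/-- If `F : ℝⁿ × X → Y` is Bohr `(𝓑,I',ρ,𝒫)`-almost periodic, `ρ` is single-valued on the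
range of `F`, `P` has a linear structure, `d` is translation invariant and condition (P)
holds, then `F` is Bohr `(𝓑,I'−I',𝐈,𝒫₁)`-almost periodic. -/
theorem stmt9 {n : ℕ} {X Y : Type*}
    [NormedAddCommGroup X] [NormedSpace ℂ X] [CompleteSpace X]
    [NormedAddCommGroup Y] [NormedSpace ℂ Y] [CompleteSpace Y]
    (I' : Set (EuclideanSpace ℝ (Fin n))) (hI' : I'.Nonempty)
    (𝓑 : Set (Set X)) (h𝓑ne : 𝓑.Nonempty) (h𝓑 : ∀ B ∈ 𝓑, B.Nonempty)
    (h𝓑union : ∀ x : X, ∃ B ∈ 𝓑, x ∈ B)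
    (ρ : Y → Y → Prop) (F : EuclideanSpace ℝ (Fin n) → X → Y)
    (hρ : ∀ (t : EuclideanSpace ℝ (Fin n)) (x : X), ∃! y : Y, ρ (F t x) y)
    (P : Set (EuclideanSpace ℝ (Fin n) → Y))
    (d : (EuclideanSpace ℝ (Fin n) → Y) → (EuclideanSpace ℝ (Fin n) → Y) → ℝ)
    (hP0 : (0 : EuclideanSpace ℝ (Fin n) → Y) ∈ P) (hPd : IsMetricOn P d)
    (hPadd : ∀ f ∈ P, ∀ g ∈ P, f + g ∈ P)
    (hPsmul : ∀ c : ℂ, ∀ f ∈ P, c • f ∈ P)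
    (hdtrans : ∀ f g h : EuclideanSpace ℝ (Fin n) → Y,
      f ∈ P → h ∈ P → f + g ∈ P → h + g ∈ P → d (f + g) (h + g) = d f h)
    (P₁ : Set (EuclideanSpace ℝ (Fin n) → Y))
    (d₁ : (EuclideanSpace ℝ (Fin n) → Y) → (EuclideanSpace ℝ (Fin n) → Y) → ℝ)
    (hP₁0 : (0 : EuclideanSpace ℝ (Fin n) → Y) ∈ P₁) (hP₁d : IsMetricOn P₁ d₁)
    (c : ℝ) (hc : 0 < c)
    (hcondP : ∀ f ∈ P, ∀ τ ∈ I',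
      (fun t => f (t - τ)) ∈ P₁ ∧ d₁ (fun t => f (t - τ)) 0 ≤ c * d f 0)
    (hF : BohrAPFull I' 𝓑 ρ P d F) :
    BohrAPFull {s : EuclideanSpace ℝ (Fin n) | ∃ τ₁ ∈ I', ∃ τ₂ ∈ I', s = τ₁ - τ₂}
      𝓑 (fun y₁ y₂ => y₁ = y₂) P₁ d₁ F := by
  intro B hB ε hε
  have hε' : 0 < ε / (2 * c) := by positivity
  obtain ⟨l, hl, hprop⟩ := hF B hB (ε / (2 * c)) hε'
  refine ⟨2 * l, by linarith, ?_⟩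
  rintro t₀ ⟨t₁, ht₁, t₂, ht₂, rfl⟩
  obtain ⟨τ₁, hτ₁, hτ₁l, y₁, hy₁ρ, hy₁P, hy₁d⟩ := hprop t₁ ht₁
  obtain ⟨τ₂, hτ₂, hτ₂l, y₂, hy₂ρ, hy₂P, hy₂d⟩ := hprop t₂ ht₂
  have key : ∀ x ∈ B, (fun t => F (t + (τ₁ - τ₂)) x - F t x) ∈ P₁ ∧
      d₁ (fun t => F (t + (τ₁ - τ₂)) x - F t x) 0 ≤ ε := by
    intro x hx
    set f : EuclideanSpace ℝ (Fin n) → Y := fun t => F (t + τ₁) x - y₁ t x with hf_def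
    set g : EuclideanSpace ℝ (Fin n) → Y := fun t => F (t + τ₂) x - y₂ t x with hg_def
    have hfP : f ∈ P := hy₁P x hx
    have hgP : g ∈ P := hy₂P x hx
    have hyeq : ∀ t, y₁ t x = y₂ t x := fun t =>
      (hρ t x).unique (hy₁ρ t x hx) (hy₂ρ t x hx)
    set h : EuclideanSpace ℝ (Fin n) → Y := fun t => F (t + τ₁) x - F (t + τ₂) x with hh_def
    have hhfg : h = f + (-1 : ℂ) • g := by
      funext t
      show F (t + τ₁) x - F (t + τ₂) x =
        (F (t + τ₁) x - y₁ t x) + (-1 : ℂ) • (F (t + τ₂) x - y₂ t x)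
      rw [neg_one_smul ℂ, hyeq t]
      abel
    have hhP : h ∈ P := hhfg ▸ hPadd f hfP _ (hPsmul (-1) g hgP)
    have hfg : f = h + g := by
      funext t
      show F (t + τ₁) x - y₁ t x =
        (F (t + τ₁) x - F (t + τ₂) x) + (F (t + τ₂) x - y₂ t x)
      rw [hyeq t]
      abel
    have hdh : d h 0 = d f g := by
      have := hdtrans h g 0 hhP hP0 (hfg ▸ hfP) (by simpa using hgP)
      rw [zero_add] at this
      rw [← this, ← hfg]
    have hdh2 : d h 0 ≤ 2 * (ε / (2 * c)) := by
      have htri := hPd.2.2.2 f hfP 0 hP0 g hgP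
      have hsym := hPd.2.2.1 (0 : EuclideanSpace ℝ (Fin n) → Y) hP0 g hgP
      have h1 := hy₁d x hx
      have h2 := hy₂d x hx
      rw [hdh]
      calc d f g ≤ d f 0 + d 0 g := htri
        _ = d f 0 + d g 0 := by rw [hsym]
        _ ≤ 2 * (ε / (2 * c)) := by
            simp only [hf_def, hg_def] at h1 h2 ⊢; linarith
    obtain ⟨hmem, hbound⟩ := hcondP h hhP τ₂ hτ₂
    have hfun : (fun t => h (t - τ₂)) = fun t => F (t + (τ₁ - τ₂)) x - F t x := by
      funext t
      have e1 : t - τ₂ + τ₁ = t + (τ₁ - τ₂) := by abel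
      have e2 : t - τ₂ + τ₂ = t := by abel
      simp only [hh_def, e1, e2]
    rw [hfun] at hmem hbound
    refine ⟨hmem, hbound.trans ?_⟩
    have hceq : c * (2 * (ε / (2 * c))) = ε := by field_simp
    calc c * d h 0 ≤ c * (2 * (ε / (2 * c))) :=
          mul_le_mul_of_nonneg_left hdh2 hc.le
      _ = ε := hceq
  refine ⟨τ₁ - τ₂, ⟨τ₁, hτ₁, τ₂, hτ₂, rfl⟩, ?_, F, fun t x _ => rfl,
    fun x hx => (key x hx).1, fun x hx => (key x hx).2⟩
  have heq : τ₁ - τ₂ - (t₁ - t₂) = τ₁ - t₁ - (τ₂ - t₂) := by abel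
  rw [heq]
  calc ‖τ₁ - t₁ - (τ₂ - t₂)‖ ≤ ‖τ₁ - t₁‖ + ‖τ₂ - t₂‖ := norm_sub_le _ _
    _ ≤ 2 * l := by linarith
end
end

section
/- Let ∅ ≠ I' ⊆ ℝⁿ and ∅ ≠ I ⊆ ℝⁿ with I + I' ⊆ I, let X, Y, Z be complex Banach spaces, let 𝓑 be a nonempty collection of nonempty subsets of X whose union is X, let ρ be a binary relation on Y, and let ρ_Z be a binary relation on Z. Let 𝒫 = (P,d) be a metric space with P a set of functions from I to Y containing 0, and 𝒫_Z = (P_Z,d_Z) a metric space with P_Z a set of functions from I to Z containing 0. Let φ : Y → Z be a map such that: (a) for all functions G₁, G₂ : I → Y with G₁ − G₂ ∈ P, the function φ∘G₁ − φ∘G₂ belongs to P_Z; (b) for every ε > 0 there exists δ > 0 such that for all G₁, G₂ : I → Y with G₁ − G₂ ∈ P and ‖G₁ − G₂‖_P ≤ δ one has ‖φ∘G₁ − φ∘G₂‖_{P_Z} ≤ ε; and (c) φ(ρ(F(t;x))) ⊆ ρ_Z(φ(F(t;x))) for all t ∈ I and x ∈ X. If F : I × X → Y is Bohr (𝓑,I',ρ,𝒫)-almost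 periodic, then φ∘F : I × X → Z, (φ∘F)(t;x) := φ(F(t;x)), is Bohr (𝓑,I',ρ_Z,𝒫_Z)-almost periodic. -/
noncomputable section

/-- If `φ : Y → Z` is uniformly continuous with respect to `𝒫` and `𝒫_Z`, maps
`P`-differences to `P_Z`-differences, and is compatible with the relations `ρ` and `ρ_Z`,
then `φ∘F` is Bohr `(𝓑,I',ρ_Z,𝒫_Z)`-almost periodic whenever `F` is Bohr
`(𝓑,I',ρ,𝒫)`-almost periodic. -/
theorem stmt11 {n : ℕ} {X Y Z : Type*}
    [NormedAddCommGroup X] [NormedSpace ℂ X] [CompleteSpace X]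
    [NormedAddCommGroup Y] [NormedSpace ℂ Y] [CompleteSpace Y]
    [NormedAddCommGroup Z] [NormedSpace ℂ Z] [CompleteSpace Z]
    (I I' : Set (EuclideanSpace ℝ (Fin n))) (hI : I.Nonempty) (hI' : I'.Nonempty)
    (hII' : ∀ τ ∈ I', ∀ t ∈ I, t + τ ∈ I)
    (𝓑 : Set (Set X)) (h𝓑ne : 𝓑.Nonempty) (h𝓑 : ∀ B ∈ 𝓑, B.Nonempty)
    (h𝓑union : ∀ x : X, ∃ B ∈ 𝓑, x ∈ B)
    (ρ : Y → Y → Prop) (ρZ : Z → Z → Prop)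
    (P : Set (↥I → Y)) (d : (↥I → Y) → (↥I → Y) → ℝ)
    (hP0 : (0 : ↥I → Y) ∈ P) (hPd : IsMetricOn P d)
    (PZ : Set (↥I → Z)) (dZ : (↥I → Z) → (↥I → Z) → ℝ)
    (hPZ0 : (0 : ↥I → Z) ∈ PZ) (hPZd : IsMetricOn PZ dZ)
    (φ : Y → Z)
    (hmap : ∀ G₁ G₂ : ↥I → Y, G₁ - G₂ ∈ P →
      (fun t => φ (G₁ t) - φ (G₂ t)) ∈ PZ)
    (hunif : ∀ ε : ℝ, 0 < ε → ∃ δ : ℝ, 0 < δ ∧ ∀ G₁ G₂ : ↥I → Y, G₁ - G₂ ∈ P →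
      d (G₁ - G₂) 0 ≤ δ → dZ (fun t => φ (G₁ t) - φ (G₂ t)) 0 ≤ ε)
    (F : ↥I → X → Y)
    (hcomp : ∀ (t : ↥I) (x : X) (y : Y), ρ (F t x) y → ρZ (φ (F t x)) (φ y))
    (hF : BohrAP I I' 𝓑 ρ P d hII' F) :
    BohrAP I I' 𝓑 ρZ PZ dZ hII' (fun t x => φ (F t x)) := by
  intro B hB ε hε
  obtain ⟨δ, hδ, hδ'⟩ := hunif ε hε
  obtain ⟨l, hl, hl'⟩ := hF B hB δ hδ
  refine ⟨l, hl, fun t₀ ht₀ => ?_⟩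
  obtain ⟨τ, hτ, hτl, y, hρ, hPmem, hd⟩ := hl' t₀ ht₀
  refine ⟨τ, hτ, hτl, fun t x => φ (y t x), fun t x hx => hcomp t x _ (hρ t x hx), ?_, ?_⟩
  · intro x hx
    exact hmap (fun t : ↥I => F ⟨(t : EuclideanSpace ℝ (Fin n)) + τ, hII' τ hτ t t.2⟩ x)
      (fun t => y t x) (hPmem x hx)
  · intro x hx
    exact hδ' (fun t : ↥I => F ⟨(t : EuclideanSpace ℝ (Fin n)) + τ, hII' τ hτ t t.2⟩ x)
      (fun t => y t x) (hPmem x hx) (hd x hx)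
end
end

section
/- Let I = [0,∞), let Y be a complex Banach space, let T ∈ L(Y), and let 𝒫 = (P,d) be a metric space where P is a set of functions from I to Y containing 0, P is closed under addition and scalar multiplication, d is translation invariant (d(f+g,h+g) = d(f,h) whenever f,h,f+g,h+g ∈ P), and such that: for every f ∈ P and τ ∈ I, f(·+τ) ∈ P and ‖f(·+τ)‖_P = ‖f‖_P, and for every f ∈ P, T∘f ∈ P and ‖T∘f‖_P ≤ c_T ‖f‖_P for some constant c_T > 0 independent of f. If F : I → Y is (T,𝒫)-almost periodic, then for every m ∈ ℕ the function F is (T^m,𝒫)-almost periodic; in particular, if T^m = 𝐈 for some m ∈ ℕ, then F is 𝒫-almost periodic (i.e., (𝐈,𝒫)-almost periodic). -/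
noncomputable section

/-- `(S,𝒫)`-almost periodicity of `F : [0,∞) → Y`, for a bounded linear operator
`S ∈ L(Y)`: for every `ε > 0` there is `l > 0` such that every interval `B(t₀,l) ∩ [0,∞)`
contains a point `τ` with `F(·+τ) − S∘F ∈ P` and `‖F(·+τ) − S∘F‖_P ≤ ε`. -/
def SAP {Y : Type*} [NormedAddCommGroup Y] [NormedSpace ℂ Y]
    (S : Y →L[ℂ] Y)
    (P : Set (↥(Set.Ici (0 : ℝ)) → Y))
    (d : (↥(Set.Ici (0 : ℝ)) → Y) → (↥(Set.Ici (0 : ℝ)) → Y) → ℝ)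
    (F : ↥(Set.Ici (0 : ℝ)) → Y) : Prop :=
  ∀ ε : ℝ, 0 < ε → ∃ l : ℝ, 0 < l ∧ ∀ t₀ : ℝ, 0 ≤ t₀ →
    ∃ τ : ℝ, ∃ hτ : 0 ≤ τ, |τ - t₀| ≤ l ∧
      (fun t : ↥(Set.Ici (0 : ℝ)) =>
        F ⟨(t : ℝ) + τ, add_nonneg t.2 hτ⟩ - S (F t)) ∈ P ∧
      d (fun t : ↥(Set.Ici (0 : ℝ)) =>
        F ⟨(t : ℝ) + τ, add_nonneg t.2 hτ⟩ - S (F t)) 0 ≤ ε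

/-- If `F : [0,∞) → Y` is `(T,𝒫)`-almost periodic, then `F` is `(T^m,𝒫)`-almost periodic
for every `m ∈ ℕ`; in particular, if `T^m = 𝐈` for some `m`, then `F` is `𝒫`-almost
periodic, i.e., `(𝐈,𝒫)`-almost periodic. -/
theorem stmt12 {Y : Type*} [NormedAddCommGroup Y] [NormedSpace ℂ Y] [CompleteSpace Y]
    (T : Y →L[ℂ] Y)
    (P : Set (↥(Set.Ici (0 : ℝ)) → Y))
    (d : (↥(Set.Ici (0 : ℝ)) → Y) → (↥(Set.Ici (0 : ℝ)) → Y) → ℝ)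
    (hP0 : (0 : ↥(Set.Ici (0 : ℝ)) → Y) ∈ P) (hPd : IsMetricOn P d)
    (hPadd : ∀ f ∈ P, ∀ g ∈ P, f + g ∈ P)
    (hPsmul : ∀ c : ℂ, ∀ f ∈ P, c • f ∈ P)
    (hdtrans : ∀ f g h : ↥(Set.Ici (0 : ℝ)) → Y, f ∈ P → h ∈ P → f + g ∈ P → h + g ∈ P →
      d (f + g) (h + g) = d f h)
    (htransl : ∀ f ∈ P, ∀ τ : ℝ, ∀ hτ : 0 ≤ τ,
      (fun t : ↥(Set.Ici (0 : ℝ)) => f ⟨(t : ℝ) + τ, add_nonneg t.2 hτ⟩) ∈ P ∧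
      d (fun t : ↥(Set.Ici (0 : ℝ)) => f ⟨(t : ℝ) + τ, add_nonneg t.2 hτ⟩) 0 = d f 0)
    (cT : ℝ) (hcT : 0 < cT)
    (hT : ∀ f ∈ P, (fun t => T (f t)) ∈ P ∧ d (fun t => T (f t)) 0 ≤ cT * d f 0)
    (F : ↥(Set.Ici (0 : ℝ)) → Y)
    (hF : SAP T P d F) :
    (∀ m : ℕ, 0 < m → SAP (T ^ m) P d F) ∧
      (∀ m : ℕ, 0 < m → T ^ m = 1 → SAP (1 : Y →L[ℂ] Y) P d F) := by

  have dadd : ∀ f ∈ P, ∀ g ∈ P, d (f + g) 0 ≤ d f 0 + d g 0 := by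
    intro f hf g hg
    have hfg := hPadd f hf g hg
    have h1 : d (f + g) 0 ≤ d (f + g) g + d g 0 :=
      hPd.2.2.2 (f + g) hfg g hg 0 hP0
    have h2 : d (f + g) g = d f 0 := by
      have := hdtrans f g 0 hf hP0 hfg (by simpa using hg)
      simpa using this
    linarith
  have main : ∀ m : ℕ, 0 < m → SAP (T ^ m) P d F := by
    intro m hm ε hε
    set B : ℝ := ∑ j ∈ Finset.range m, cT ^ j with hB
    have hB0 : 0 ≤ B := Finset.sum_nonneg fun j _ => (pow_nonneg hcT.le j)
    have hε'pos : 0 < ε / (B + 1) := div_pos hε (by linarith)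
    obtain ⟨l, hl, hl'⟩ := hF (ε / (B + 1)) hε'pos
    refine ⟨m * l, by positivity, ?_⟩
    intro t₀ ht₀
    obtain ⟨τ, hτ, hτl, hmem, hd⟩ := hl' (t₀ / m) (by positivity)
    have key : ∀ k : ℕ,
        (fun t : ↥(Set.Ici (0 : ℝ)) =>
          F ⟨(t : ℝ) + (k : ℝ) * τ, add_nonneg t.2 (mul_nonneg (Nat.cast_nonneg k) hτ)⟩
            - (T ^ k) (F t)) ∈ P ∧
        d (fun t : ↥(Set.Ici (0 : ℝ)) =>
          F ⟨(t : ℝ) + (k : ℝ) * τ, add_nonneg t.2 (mul_nonneg (Nat.cast_nonneg k) hτ)⟩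
            - (T ^ k) (F t)) 0 ≤ (∑ j ∈ Finset.range k, cT ^ j) * (ε / (B + 1)) := by
      intro k
      induction k with
      | zero =>
        have he : (fun t : ↥(Set.Ici (0 : ℝ)) =>
            F ⟨(t : ℝ) + ((0 : ℕ) : ℝ) * τ, add_nonneg t.2 (mul_nonneg (Nat.cast_nonneg 0) hτ)⟩
              - (T ^ 0) (F t)) = 0 := by
          funext t
          have h1 : (⟨(t : ℝ) + ((0 : ℕ) : ℝ) * τ, add_nonneg t.2 (mul_nonneg (Nat.cast_nonneg 0) hτ)⟩ :
              ↥(Set.Ici (0 : ℝ))) = t := Subtype.ext (by simp)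
          rw [h1]
          simp
        rw [he]
        refine ⟨hP0, ?_⟩
        simp [hPd.1 0 hP0]
      | succ k ih =>
        set G1 : ↥(Set.Ici (0 : ℝ)) → Y := fun t : ↥(Set.Ici (0 : ℝ)) =>
          F ⟨(t : ℝ) + τ, add_nonneg t.2 hτ⟩ - T (F t) with hG1
        set Gk : ↥(Set.Ici (0 : ℝ)) → Y := fun t : ↥(Set.Ici (0 : ℝ)) =>
          F ⟨(t : ℝ) + (k : ℝ) * τ, add_nonneg t.2 (mul_nonneg (Nat.cast_nonneg k) hτ)⟩
            - (T ^ k) (F t) with hGk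
        obtain ⟨hsh_mem, hsh_d⟩ := htransl G1 hmem ((k : ℝ) * τ) (mul_nonneg (Nat.cast_nonneg k) hτ)
        obtain ⟨hTmem, hTd⟩ := hT Gk ih.1
        have hdecomp : (fun t : ↥(Set.Ici (0 : ℝ)) =>
            F ⟨(t : ℝ) + ((k + 1 : ℕ) : ℝ) * τ, add_nonneg t.2 (mul_nonneg (Nat.cast_nonneg (k + 1)) hτ)⟩
              - (T ^ (k + 1)) (F t))
            = (fun t : ↥(Set.Ici (0 : ℝ)) =>
                G1 ⟨(t : ℝ) + (k : ℝ) * τ, add_nonneg t.2 (mul_nonneg (Nat.cast_nonneg k) hτ)⟩)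
              + (fun t => T (Gk t)) := by
          funext t
          show F ⟨(t : ℝ) + ((k + 1 : ℕ) : ℝ) * τ, _⟩ - (T ^ (k + 1)) (F t)
            = (F ⟨((t : ℝ) + (k : ℝ) * τ) + τ, _⟩
                - T (F ⟨(t : ℝ) + (k : ℝ) * τ, _⟩))
              + (T (F ⟨(t : ℝ) + (k : ℝ) * τ, _⟩ - (T ^ k) (F t)))
          have h1 : ((t : ℝ) + ((k + 1 : ℕ) : ℝ) * τ) = (((t : ℝ) + (k : ℝ) * τ) + τ) := by
            push_cast; ring
          have h2 : (⟨(t : ℝ) + ((k + 1 : ℕ) : ℝ) * τ, add_nonneg t.2 (mul_nonneg (Nat.cast_nonneg (k + 1)) hτ)⟩ :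
              ↥(Set.Ici (0 : ℝ)))
              = ⟨((t : ℝ) + (k : ℝ) * τ) + τ, add_nonneg (add_nonneg t.2 (mul_nonneg (Nat.cast_nonneg k) hτ)) hτ⟩ :=
            Subtype.ext h1
          rw [h2, map_sub]
          have h3 : (T ^ (k + 1)) (F t) = T ((T ^ k) (F t)) := by
            rw [pow_succ']; rfl
          rw [h3]
          abel
        rw [hdecomp]
        refine ⟨hPadd _ hsh_mem _ hTmem, ?_⟩
        have hb1 : d (fun t : ↥(Set.Ici (0 : ℝ)) =>
            G1 ⟨(t : ℝ) + (k : ℝ) * τ, add_nonneg t.2 (mul_nonneg (Nat.cast_nonneg k) hτ)⟩) 0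
            ≤ ε / (B + 1) := by rw [hsh_d]; exact hd
        have hb2 : d (fun t => T (Gk t)) 0 ≤ cT * ((∑ j ∈ Finset.range k, cT ^ j) * (ε / (B + 1))) :=
          le_trans hTd (by
            have := ih.2
            nlinarith [hcT.le])
        have hb3 := dadd _ hsh_mem _ hTmem
        have hgeom : (∑ j ∈ Finset.range (k + 1), cT ^ j)
            = cT * (∑ j ∈ Finset.range k, cT ^ j) + 1 := geom_sum_succ
        rw [hgeom]
        calc d _ 0 ≤ _ := hb3
          _ ≤ ε / (B + 1) + cT * ((∑ j ∈ Finset.range k, cT ^ j) * (ε / (B + 1))) := by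
              linarith
          _ = (cT * (∑ j ∈ Finset.range k, cT ^ j) + 1) * (ε / (B + 1)) := by ring
    refine ⟨(m : ℝ) * τ, mul_nonneg (Nat.cast_nonneg m) hτ, ?_, (key m).1, ?_⟩
    · have hmpos : (0 : ℝ) < (m : ℝ) := by exact_mod_cast hm
      have : (m : ℝ) * τ - t₀ = (m : ℝ) * (τ - t₀ / m) := by field_simp
      rw [this, abs_mul, abs_of_pos hmpos]
      exact mul_le_mul_of_nonneg_left hτl hmpos.le
    · refine le_trans (key m).2 ?_
      rw [← hB]
      rw [div_eq_mul_inv]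
      have h1 : B * (ε * (B + 1)⁻¹) ≤ (B + 1) * (ε * (B + 1)⁻¹) := by
        apply mul_le_mul_of_nonneg_right (by linarith)
        positivity
      have h2 : (B + 1) * (ε * (B + 1)⁻¹) = ε := by field_simp
      linarith
  refine ⟨main, ?_⟩
  intro m hm hTm
  have h := main m hm
  rwa [hTm] at h
end
end

section
/- Let Y be a complex Banach space, let n ∈ ℕ, let ν : ℝⁿ → (0,∞) be a function such that 1/ν is locally bounded and lim_{|t|→∞} ν(t) = +∞, let ω ∈ ℝⁿ \ {0}, and let F : ℝⁿ → Y be a function satisfying the supremum formula sup_{t∈ℝⁿ} ‖F(t+ω) − F(t)‖_Y = sup_{t∈ℝⁿ, |t|≥a} ‖F(t+ω) − F(t)‖_Y for all a > 0. If F(·+ω) − F(·) ∈ C_{0,ν}(ℝⁿ : Y), then F is ω-periodic, i.e., F(t+ω) = F(t) for all t ∈ ℝⁿ. -/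
noncomputable section

open Filter

/-- If `ν(t) → +∞` as `|t| → ∞`, `F` satisfies the supremum formula
`sup_{t} ‖F(t+ω) − F(t)‖ = sup_{|t| ≥ a} ‖F(t+ω) − F(t)‖` for all `a > 0`, and
`F(·+ω) − F(·) ∈ C_{0,ν}(ℝⁿ : Y)`, then `F` is `ω`-periodic. -/
theorem stmt13 {n : ℕ} {Y : Type*} [NormedAddCommGroup Y] [NormedSpace ℂ Y] [CompleteSpace Y]
    (ν : EuclideanSpace ℝ (Fin n) → ℝ) (hν : ∀ t, 0 < ν t)
    (hloc : ∀ r : ℝ, 0 < r → ∃ M : ℝ, ∀ t : EuclideanSpace ℝ (Fin n), ‖t‖ ≤ r → 1 / ν t ≤ M)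
    (hνtop : Filter.Tendsto ν
      (Filter.comap (fun t : EuclideanSpace ℝ (Fin n) => ‖t‖) Filter.atTop) Filter.atTop)
    (ω : EuclideanSpace ℝ (Fin n)) (hω : ω ≠ 0)
    (F : EuclideanSpace ℝ (Fin n) → Y)
    (hsup : ∀ a : ℝ, 0 < a → ∀ M : ℝ,
      (∀ t : EuclideanSpace ℝ (Fin n), a ≤ ‖t‖ → ‖F (t + ω) - F t‖ ≤ M) →
      ∀ t : EuclideanSpace ℝ (Fin n), ‖F (t + ω) - F t‖ ≤ M)
    (hmem : (fun t => F (t + ω) - F t) ∈ C0nu ν) :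
    ∀ t, F (t + ω) = F t := by
  intro t
  have hG := hmem.2
  have key : ∀ ε : ℝ, 0 < ε → ‖F (t + ω) - F t‖ ≤ ε := by
    intro ε hε
    have h1 : ∀ᶠ s in Filter.comap (fun t : EuclideanSpace ℝ (Fin n) => ‖t‖) Filter.atTop,
        ‖F (s + ω) - F s‖ * ν s < ε := hG.eventually (gt_mem_nhds hε)
    have h2 : ∀ᶠ s in Filter.comap (fun t : EuclideanSpace ℝ (Fin n) => ‖t‖) Filter.atTop,
        (1 : ℝ) ≤ ν s := hνtop.eventually_ge_atTop 1
    have h3 := h1.and h2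
    rw [Filter.eventually_comap, Filter.eventually_atTop] at h3
    obtain ⟨b, hb⟩ := h3
    refine hsup (max b 1) (by positivity) ε ?_ t
    intro s hs
    obtain ⟨hlt, hone⟩ := hb ‖s‖ (le_trans (le_max_left b 1) hs) s rfl
    calc ‖F (s + ω) - F s‖ = ‖F (s + ω) - F s‖ * 1 := (mul_one _).symm
      _ ≤ ‖F (s + ω) - F s‖ * ν s := by
          exact mul_le_mul_of_nonneg_left hone (norm_nonneg _)
      _ ≤ ε := hlt.le
  have h0 : ‖F (t + ω) - F t‖ ≤ 0 :=
    le_of_forall_pos_le_add fun ε hε => by simpa using key ε hε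
  have := norm_le_zero_iff.mp h0
  exact sub_eq_zero.mp this
end
end

section
/- Let ν₁(t) := 1/(t²+1) and ν₂(t) := 1/(t⁴+1) for t ∈ ℝ, and let 𝒫_{ν₁} and 𝒫_{ν₂} be the metric spaces associated with C_{0,ν₁}(ℝ : ℂ) and C_{0,ν₂}(ℝ : ℂ) respectively. Then a continuous function F : ℝ → ℂ is Bohr 𝒫_{ν₁}-almost periodic if and only if it is Bohr 𝒫_{ν₂}-almost periodic. -/
noncomputable section

open Filter

/-- The space `C_{0,ν}(ℝ : ℂ)` of continuous functions `u` with
`|u(t)| ν(t) → 0` as `|t| → ∞`. -/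
def C0nuR (ν : ℝ → ℝ) : Set (ℝ → ℂ) :=
  {u | Continuous u ∧
    Filter.Tendsto (fun t => ‖u t‖ * ν t)
      (Filter.comap (fun t : ℝ => |t|) Filter.atTop) (nhds 0)}

/-- Bohr `𝒫_ν`-almost periodicity of `F : ℝ → ℂ`, where `𝒫_ν` is the metric space
associated with `C_{0,ν}(ℝ : ℂ)` (so that `‖f‖_P = sup_t |f(t)| ν(t)`). -/
def BohrC0nuRAP (ν : ℝ → ℝ) (F : ℝ → ℂ) : Prop :=
  ∀ ε : ℝ, 0 < ε → ∃ l : ℝ, 0 < l ∧ ∀ t₀ : ℝ, ∃ τ : ℝ, |τ - t₀| ≤ l ∧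
    (fun t => F (t + τ) - F t) ∈ C0nuR ν ∧
    ∀ t, ‖F (t + τ) - F t‖ * ν t ≤ ε

lemma pow_add_one_pos {k : ℕ} (hp : ∀ x : ℝ, 0 ≤ x ^ k) (t : ℝ) : (0:ℝ) < t ^ k + 1 := by
  have := hp t; linarith

lemma my_tendsto_const_div_pow (k : ℕ) (hk : k ≠ 0) (hp : ∀ x : ℝ, 0 ≤ x ^ k) (c : ℝ) :
    Tendsto (fun t : ℝ => c / (t ^ k + 1))
      (Filter.comap (fun t : ℝ => |t|) Filter.atTop) (nhds 0) := by
  have h2 : Tendsto (fun t : ℝ => |t| ^ k)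
      (Filter.comap (fun t : ℝ => |t|) Filter.atTop) atTop :=
    (tendsto_pow_atTop hk).comp tendsto_comap
  have h3 : (fun t : ℝ => |t| ^ k) = fun t : ℝ => t ^ k := by
    funext t; rw [pow_abs, abs_of_nonneg (hp t)]
  rw [h3] at h2
  exact tendsto_const_nhds.div_atTop (tendsto_atTop_add_const_right _ 1 h2)

lemma mem_C0nuR_of_bounded (k : ℕ) (hk : k ≠ 0) (hp : ∀ x : ℝ, 0 ≤ x ^ k)
    (u : ℝ → ℂ) (hu : Continuous u) (M : ℝ) (hM : ∀ t, ‖u t‖ ≤ M) :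
    u ∈ C0nuR (fun t => 1 / (t ^ k + 1)) := by
  refine ⟨hu, ?_⟩
  apply squeeze_zero' (g := fun t : ℝ => M / (t ^ k + 1))
  · filter_upwards with t
    exact mul_nonneg (norm_nonneg _) (one_div_nonneg.mpr (pow_add_one_pos hp t).le)
  · filter_upwards with t
    rw [mul_one_div]
    exact div_le_div_of_nonneg_right (hM t) (pow_add_one_pos hp t).le
  · exact my_tendsto_const_div_pow k hk hp M

lemma bddOfAP (k : ℕ) (hp : ∀ x : ℝ, 0 ≤ x ^ k) (F : ℝ → ℂ) (hF : Continuous F)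
    (h : BohrC0nuRAP (fun t => 1 / (t ^ k + 1)) F) :
    ∃ M, ∀ t, ‖F t‖ ≤ M := by
  obtain ⟨l, hl, hap⟩ := h 1 one_pos
  obtain ⟨C, hC⟩ := (isCompact_Icc (a := -l) (b := l)).exists_bound_of_continuousOn
    hF.continuousOn
  refine ⟨C + (l ^ k + 1), fun t => ?_⟩
  obtain ⟨τ, hτ, _, hb⟩ := hap t
  have h1 := hb (t - τ)
  have hpos := pow_add_one_pos hp (t - τ)
  rw [mul_one_div, div_le_one hpos] at h1
  have ht : t - τ + τ = t := by ring
  rw [ht] at h1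
  have habs : |t - τ| ≤ l := by rw [abs_sub_comm]; exact hτ
  have hmem : t - τ ∈ Set.Icc (-l) l := by
    rcases abs_le.mp habs with ⟨h1', h2'⟩; exact Set.mem_Icc.mpr ⟨h1', h2'⟩
  have hkk : (t - τ) ^ k ≤ l ^ k := by
    calc (t - τ) ^ k ≤ |(t - τ) ^ k| := le_abs_self _
    _ = |t - τ| ^ k := (abs_pow _ _)
    _ ≤ l ^ k := pow_le_pow_left₀ (abs_nonneg _) habs k
  have h5 : ‖F t‖ - ‖F (t - τ)‖ ≤ ‖F t - F (t - τ)‖ := norm_sub_norm_le _ _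
  have h6 := hC (t - τ) hmem
  linarith

/-- For the weights `ν₁(t) = 1/(t²+1)` and `ν₂(t) = 1/(t⁴+1)`, a continuous function
`F : ℝ → ℂ` is Bohr `𝒫_{ν₁}`-almost periodic iff it is Bohr `𝒫_{ν₂}`-almost periodic. -/
theorem stmt14 (F : ℝ → ℂ) (hF : Continuous F) :
    BohrC0nuRAP (fun t : ℝ => 1 / (t ^ 2 + 1)) F ↔
      BohrC0nuRAP (fun t : ℝ => 1 / (t ^ 4 + 1)) F := by
  have hp2 : ∀ x : ℝ, 0 ≤ x ^ 2 := fun x => sq_nonneg x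
  have hp4 : ∀ x : ℝ, 0 ≤ x ^ 4 := fun x => by positivity
  constructor
  · intro h1 ε hε
    obtain ⟨M, hM⟩ := bddOfAP 2 hp2 F hF h1
    have hM0 : 0 ≤ M := le_trans (norm_nonneg _) (hM 0)
    obtain ⟨l, hl, hap⟩ := h1 (ε / 2) (by positivity)
    refine ⟨l, hl, fun t₀ => ?_⟩
    obtain ⟨τ, hτ, _, hb⟩ := hap t₀
    refine ⟨τ, hτ, ?_, fun t => ?_⟩
    · exact mem_C0nuR_of_bounded 4 (by norm_num) hp4 _
        (by fun_prop) (2 * M)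
        (fun t => le_trans (norm_sub_le _ _) (by linarith [hM (t + τ), hM t]))
    · have hb' := hb t
      have h2p := pow_add_one_pos hp2 t
      have h4p := pow_add_one_pos hp4 t
      rw [mul_one_div, div_le_iff₀ h2p] at hb'
      rw [mul_one_div, div_le_iff₀ h4p]
      nlinarith [mul_nonneg hε.le (sq_nonneg (t ^ 2 - 1/2)), mul_nonneg hε.le (hp4 t)]
  · intro h2 ε hε
    obtain ⟨M, hM⟩ := bddOfAP 4 hp4 F hF h2
    have hM0 : 0 ≤ M := le_trans (norm_nonneg _) (hM 0)
    have hden : (0:ℝ) < 2 * M + ε := by linarith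
    obtain ⟨l, hl, hap⟩ := h2 (ε ^ 2 / (2 * M + ε)) (by positivity)
    refine ⟨l, hl, fun t₀ => ?_⟩
    obtain ⟨τ, hτ, _, hb⟩ := hap t₀
    refine ⟨τ, hτ, ?_, fun t => ?_⟩
    · exact mem_C0nuR_of_bounded 2 (by norm_num) hp2 _
        (by fun_prop) (2 * M)
        (fun t => le_trans (norm_sub_le _ _) (by linarith [hM (t + τ), hM t]))
    · have hb' := hb t
      have h2p := pow_add_one_pos hp2 t
      have h4p := pow_add_one_pos hp4 t
      rw [mul_one_div, div_le_iff₀ h4p] at hb'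
      rw [mul_one_div, div_le_iff₀ h2p]
      have hg2M : ‖F (t + τ) - F t‖ ≤ 2 * M :=
        le_trans (norm_sub_le _ _) (by linarith [hM (t + τ), hM t])
      rcases le_or_gt (2 * M) (ε * t ^ 2) with hc | hc
      · nlinarith [hg2M, hc, hε.le]
      · have key : ε ^ 2 / (2 * M + ε) * (t ^ 4 + 1) ≤ ε * (t ^ 2 + 1) := by
          rw [div_mul_eq_mul_div, div_le_iff₀ hden]
          nlinarith [mul_le_mul_of_nonneg_left hc.le
              (mul_nonneg hε.le (sq_nonneg t)),
            mul_nonneg hM0 hε.le,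
            mul_nonneg (mul_nonneg hε.le hε.le) (sq_nonneg t)]
        linarith
end
end

section
/- Let Y be a complex Banach space, let 1 ≤ p < ∞, let ζ > 1, and set ν(t) := 1/(|t|^ζ + 1) for t ∈ ℝ. If f : ℝ → Y is Stepanov p-almost periodic, then f is Bohr 𝒫-almost periodic, where 𝒫 = (P,d) is the metric space with P = L^p_ν(ℝ : Y) := {g : ℝ → Y measurable : ∫_ℝ ‖g(t)‖^p ν(t)^p dt < ∞}, ‖g‖_P := (∫_ℝ ‖g(t)‖^p ν(t)^p dt)^{1/p}, and d(f,g) := ‖f−g‖_P; that is, for every ε > 0 there exists l > 0 such that for each t₀ ∈ ℝ there exists τ with |τ − t₀| ≤ l, f(·+τ) − f ∈ L^p_ν(ℝ : Y), and (∫_ℝ ‖f(t+τ) − f(t)‖^p ν(t)^p dt)^{1/p} ≤ ε. -/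
set_option maxHeartbeats 1000000

noncomputable section

open MeasureTheory

/-- Summability of the weight sequence over `ℕ`. -/
lemma auxSummableNat {ζ : ℝ} (hζ : 1 < ζ) :
    Summable (fun k : ℕ => 1 / ((((k : ℝ) - 1) ⊔ 0) ^ ζ + 1)) := by
  have hζ0 : (0:ℝ) ≤ ζ := by linarith
  have hsum : Summable (fun k : ℕ => (8:ℝ) ^ ζ * (1 / ((k : ℝ) + 1) ^ ζ)) := by
    have h1 : Summable (fun k : ℕ => 1 / ((k : ℝ)) ^ ζ) := Real.summable_one_div_nat_rpow.2 hζ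
    have h2 : Summable (fun k : ℕ => 1 / (((k + 1 : ℕ)) : ℝ) ^ ζ) := (summable_nat_add_iff 1).2 h1
    simp only [Nat.cast_add, Nat.cast_one] at h2
    exact h2.mul_left _
  refine Summable.of_nonneg_of_le (fun k => by positivity) (fun k => ?_) hsum
  set m : ℝ := ((k : ℝ) - 1) ⊔ 0 with hm
  have hm0 : 0 ≤ m := le_max_right _ _
  have hmden : (0:ℝ) < m ^ ζ + 1 := by
    have := Real.rpow_nonneg hm0 ζ; linarith
  have hkden : (0:ℝ) < ((k : ℝ) + 1) ^ ζ := by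
    apply Real.rpow_pos_of_pos; positivity
  have key : ((k : ℝ) + 1) ^ ζ ≤ 8 ^ ζ * (m ^ ζ + 1) := by
    rcases le_total ((k : ℝ)) 2 with hk | hk
    · have h1 : ((k : ℝ) + 1) ^ ζ ≤ (8:ℝ) ^ ζ :=
        Real.rpow_le_rpow (by positivity) (by linarith) hζ0
      have h2 : (0:ℝ) ≤ m ^ ζ := Real.rpow_nonneg hm0 ζ
      nlinarith [Real.rpow_nonneg (show (0:ℝ) ≤ 8 by norm_num) ζ]
    · have hmk : m = (k : ℝ) - 1 := max_eq_left (by linarith)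
      have h1 : ((k : ℝ) + 1) ≤ 8 * m := by rw [hmk]; linarith
      have h2 : ((k : ℝ) + 1) ^ ζ ≤ (8 * m) ^ ζ :=
        Real.rpow_le_rpow (by positivity) h1 hζ0
      have h3 : (8 * m) ^ ζ = 8 ^ ζ * m ^ ζ := Real.mul_rpow (by norm_num) hm0
      have h4 : (0:ℝ) ≤ (8:ℝ) ^ ζ := Real.rpow_nonneg (by norm_num) ζ
      nlinarith
  have h5 : 1 / (m ^ ζ + 1) ≤ 8 ^ ζ / ((k : ℝ) + 1) ^ ζ := by
    rw [div_le_div_iff₀ hmden hkden]; linarith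
  calc 1 / (m ^ ζ + 1) ≤ 8 ^ ζ / ((k : ℝ) + 1) ^ ζ := h5
    _ = 8 ^ ζ * (1 / ((k : ℝ) + 1) ^ ζ) := by ring

/-- Summability of the weight sequence over `ℤ`. -/
lemma auxSummableInt {ζ : ℝ} (hζ : 1 < ζ) :
    Summable (fun n : ℤ => 1 / ((( |(n : ℝ)| - 1) ⊔ 0) ^ ζ + 1)) := by
  have h := auxSummableNat hζ
  apply Summable.of_nat_of_neg
  · simp only [Int.cast_natCast, Nat.abs_cast]; exact h
  · simp only [Int.cast_neg, Int.cast_natCast, abs_neg, Nat.abs_cast]; exact h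

/-- Pointwise bound `‖x - y‖ ^ p ≤ 2 ^ p * (‖x‖ ^ p + ‖y‖ ^ p)`. -/
lemma auxPointwise {Y : Type*} [NormedAddCommGroup Y] {p : ℝ} (hp : 0 ≤ p) (x y : Y) :
    ‖x - y‖ ^ p ≤ 2 ^ p * (‖x‖ ^ p + ‖y‖ ^ p) := by
  have h1 : ‖x - y‖ ≤ 2 * (‖x‖ ⊔ ‖y‖) := by
    have := norm_sub_le x y
    have hx := le_max_left ‖x‖ ‖y‖
    have hy := le_max_right ‖x‖ ‖y‖
    linarith
  have hmax0 : (0:ℝ) ≤ ‖x‖ ⊔ ‖y‖ := le_trans (norm_nonneg x) (le_max_left _ _)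
  calc ‖x - y‖ ^ p ≤ (2 * (‖x‖ ⊔ ‖y‖)) ^ p := Real.rpow_le_rpow (norm_nonneg _) h1 hp
    _ = 2 ^ p * (‖x‖ ⊔ ‖y‖) ^ p := Real.mul_rpow (by norm_num) hmax0
    _ ≤ 2 ^ p * (‖x‖ ^ p + ‖y‖ ^ p) := by
        apply mul_le_mul_of_nonneg_left _ (Real.rpow_nonneg (by norm_num) p)
        rcases le_total ‖x‖ ‖y‖ with h | h
        · rw [max_eq_right h]
          have := Real.rpow_nonneg (norm_nonneg x) p; linarith
        · rw [max_eq_left h]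
          have := Real.rpow_nonneg (norm_nonneg y) p; linarith

/-- A Stepanov `p`-almost periodic function `f : ℝ → Y` is Bohr `𝒫`-almost periodic for
`𝒫` the metric space associated with the weighted Lebesgue space `L^p_ν(ℝ : Y)` with the
weight `ν(t) = 1/(|t|^ζ + 1)`, `ζ > 1`. -/
theorem stmt17 {Y : Type*} [NormedAddCommGroup Y] [NormedSpace ℂ Y] [CompleteSpace Y]
    (p : ℝ) (hp : 1 ≤ p) (ζ : ℝ) (hζ : 1 < ζ)
    (f : ℝ → Y)
    (hmeas : MeasureTheory.AEStronglyMeasurable f MeasureTheory.volume)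
    (hloc : ∀ a b : ℝ, MeasureTheory.IntegrableOn (fun s => ‖f s‖ ^ p) (Set.Icc a b))
    (hstep : ∀ ε : ℝ, 0 < ε → ∃ l : ℝ, 0 < l ∧ ∀ t₀ : ℝ, ∃ τ : ℝ, |τ - t₀| ≤ l ∧
      ∀ t : ℝ, (∫ s in Set.Icc t (t + 1), ‖f (s + τ) - f s‖ ^ p) ^ (1 / p) ≤ ε) :
    ∀ ε : ℝ, 0 < ε → ∃ l : ℝ, 0 < l ∧ ∀ t₀ : ℝ, ∃ τ : ℝ, |τ - t₀| ≤ l ∧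
      MeasureTheory.Integrable
        (fun t : ℝ => ‖f (t + τ) - f t‖ ^ p * (1 / (|t| ^ ζ + 1)) ^ p) ∧
      (∫ t : ℝ, ‖f (t + τ) - f t‖ ^ p * (1 / (|t| ^ ζ + 1)) ^ p) ^ (1 / p) ≤ ε := by
  intro ε hε
  have hp0 : (0:ℝ) < p := lt_of_lt_of_le one_pos hp
  have hζ0 : (0:ℝ) ≤ ζ := by linarith
  -- the weight sequence
  set w : ℤ → ℝ := fun n => 1 / ((( |(n : ℝ)| - 1) ⊔ 0) ^ ζ + 1) with hw_def
  have hw_nonneg : ∀ n, 0 ≤ w n := by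
    intro n
    have h0 : (0:ℝ) ≤ (( |(n : ℝ)| - 1) ⊔ 0) := le_max_right _ _
    have := Real.rpow_nonneg h0 ζ
    positivity
  have hw_sum : Summable w := auxSummableInt hζ
  set C : ℝ := ∑' n, w n with hC_def
  have hC0 : 0 ≤ C := tsum_nonneg hw_nonneg
  have hC1 : (0:ℝ) < C + 1 := by linarith
  set ε' : ℝ := ε * (C + 1) ^ (-(1/p)) with hε'_def
  have hε'pos : 0 < ε' := mul_pos hε (Real.rpow_pos_of_pos hC1 _)
  obtain ⟨l, hl, hstep'⟩ := hstep ε' hε'pos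
  refine ⟨l, hl, fun t₀ => ?_⟩
  obtain ⟨τ, hτ, hbound⟩ := hstep' t₀
  -- notation
  set Δ : ℝ → Y := fun t => f (t + τ) - f t with hΔ_def
  set ν : ℝ → ℝ := fun t => 1 / (|t| ^ ζ + 1) with hν_def
  have hνpos : ∀ t, 0 < ν t := by
    intro t
    have := Real.rpow_nonneg (abs_nonneg t) ζ
    simp only [hν_def]; positivity
  have hνle1 : ∀ t, ν t ≤ 1 := by
    intro t
    have := Real.rpow_nonneg (abs_nonneg t) ζ
    simp only [hν_def]
    rw [div_le_one (by linarith)]; linarith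
  -- measurability facts
  have hΔm : AEStronglyMeasurable Δ volume := by
    have h1 : AEStronglyMeasurable (fun t : ℝ => f (t + τ)) volume :=
      hmeas.comp_quasiMeasurePreserving
        (measurePreserving_add_right volume τ).quasiMeasurePreserving
    exact h1.sub hmeas
  have hN : AEMeasurable (fun t => ‖Δ t‖ ^ p) volume :=
    hΔm.norm.aemeasurable.pow aemeasurable_const
  have hνcont : Continuous (fun t : ℝ => (ν t) ^ p) := by
    have h1 : Continuous fun t : ℝ => |t| ^ ζ :=
      continuous_abs.rpow_const (fun x => Or.inr hζ0)
    have h2 : Continuous fun t : ℝ => 1 / (|t| ^ ζ + 1) := by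
      apply continuous_const.div (h1.add continuous_const)
      intro x
      have := Real.rpow_nonneg (abs_nonneg x) ζ
      exact (by linarith : (0:ℝ) < |x| ^ ζ + 1).ne'
    exact h2.rpow_const (fun x => Or.inr hp0.le)
  have hHm : AEStronglyMeasurable (fun t => ‖Δ t‖ ^ p * (ν t) ^ p) volume :=
    (hN.mul hνcont.aemeasurable).aestronglyMeasurable
  have hH_nonneg : 0 ≤ᵐ[volume] (fun t => ‖Δ t‖ ^ p * (ν t) ^ p) :=
    Filter.Eventually.of_forall fun t =>
      mul_nonneg (Real.rpow_nonneg (norm_nonneg _) _) (Real.rpow_nonneg (hνpos t).le _)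
  -- integrability of ‖Δ‖^p on compact intervals
  have htrans : ∀ a b : ℝ, IntegrableOn (fun s => ‖f (s + τ)‖ ^ p) (Set.Icc a b) volume := by
    intro a b
    have h1 := hloc (a + τ) (b + τ)
    have hmp : MeasurePreserving (fun t : ℝ => t + τ)
        (volume.restrict (Set.Icc a b)) (volume.restrict (Set.Icc (a + τ) (b + τ))) := by
      have h2 := (measurePreserving_add_right volume τ).restrict_preimage
        (measurableSet_Icc : MeasurableSet (Set.Icc (a + τ) (b + τ)))
      rwa [Set.preimage_add_const_Icc, add_sub_cancel_right, add_sub_cancel_right] at h2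
    have hgm : AEStronglyMeasurable (fun s => ‖f s‖ ^ p)
        (volume.restrict (Set.Icc (a + τ) (b + τ))) :=
      ((hmeas.norm.aemeasurable.pow aemeasurable_const).aestronglyMeasurable).restrict
    exact (hmp.integrable_comp hgm).2 h1
  have hΔint : ∀ a b : ℝ, IntegrableOn (fun s => ‖Δ s‖ ^ p) (Set.Icc a b) volume := by
    intro a b
    have hmaj : IntegrableOn
        (fun s => (2:ℝ) ^ p * (‖f (s + τ)‖ ^ p + ‖f s‖ ^ p)) (Set.Icc a b) volume :=
      ((htrans a b).add (hloc a b)).const_mul _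
    refine Integrable.mono' hmaj
      ((hN.aestronglyMeasurable).restrict) (Filter.Eventually.of_forall fun s => ?_)
    rw [Real.norm_eq_abs, abs_of_nonneg (Real.rpow_nonneg (norm_nonneg _) _)]
    exact auxPointwise hp0.le (f (s + τ)) (f s)
  -- per-interval integral bound
  have hIb : ∀ n : ℤ, ∫ s in Set.Icc (n : ℝ) ((n : ℝ) + 1), ‖Δ s‖ ^ p ≤ ε' ^ p := by
    intro n
    set x : ℝ := ∫ s in Set.Icc (n : ℝ) ((n : ℝ) + 1), ‖Δ s‖ ^ p with hx_def
    have hx0 : 0 ≤ x :=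
      integral_nonneg fun s => Real.rpow_nonneg (norm_nonneg _) _
    have hb := hbound (n : ℝ)
    calc x = (x ^ (1/p)) ^ p := by
          rw [one_div, Real.rpow_inv_rpow hx0 (ne_of_gt hp0)]
      _ ≤ ε' ^ p := Real.rpow_le_rpow (Real.rpow_nonneg hx0 _) hb hp0.le
  -- per-interval lintegral bound
  have hI : ∀ n : ℤ, ∫⁻ t in Set.Ico (n : ℝ) ((n : ℝ) + 1),
      ENNReal.ofReal (‖Δ t‖ ^ p * (ν t) ^ p) ≤ ENNReal.ofReal (ε' ^ p) * ENNReal.ofReal (w n) := by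
    intro n
    have hpt : ∀ t ∈ Set.Ico (n : ℝ) ((n : ℝ) + 1),
        ENNReal.ofReal (‖Δ t‖ ^ p * (ν t) ^ p)
          ≤ ENNReal.ofReal (‖Δ t‖ ^ p) * ENNReal.ofReal (w n) := by
      intro t ht
      have habs : |(n : ℝ)| - 1 ≤ |t| := by
        have h1 : |(n : ℝ)| ≤ |t| + |(n : ℝ) - t| := by
          have := abs_sub_abs_le_abs_sub (n : ℝ) t
          linarith [abs_nonneg ((n:ℝ) - t)]
        have h2 : |(n : ℝ) - t| ≤ 1 := by
          rw [abs_le]; constructor <;> [linarith [ht.2]; linarith [ht.1]]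
        linarith
      have hm2 : (( |(n : ℝ)| - 1) ⊔ 0) ≤ |t| := max_le habs (abs_nonneg t)
      have hζr : (( |(n : ℝ)| - 1) ⊔ 0) ^ ζ ≤ |t| ^ ζ :=
        Real.rpow_le_rpow (le_max_right _ _) hm2 hζ0
      have hν1 : ν t ≤ w n := by
        simp only [hν_def, hw_def]
        apply one_div_le_one_div_of_le
        · have := Real.rpow_nonneg (le_max_right ( |(n : ℝ)| - 1) (0:ℝ)) ζ
          linarith
        · linarith
      have hνp : (ν t) ^ p ≤ ν t := by
        have := Real.rpow_le_rpow_of_exponent_ge (hνpos t) (hνle1 t) hp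
        rwa [Real.rpow_one] at this
      have hfinal : ‖Δ t‖ ^ p * (ν t) ^ p ≤ ‖Δ t‖ ^ p * w n :=
        mul_le_mul_of_nonneg_left (le_trans hνp hν1) (Real.rpow_nonneg (norm_nonneg _) _)
      calc ENNReal.ofReal (‖Δ t‖ ^ p * (ν t) ^ p)
          ≤ ENNReal.ofReal (‖Δ t‖ ^ p * w n) := ENNReal.ofReal_le_ofReal hfinal
        _ = ENNReal.ofReal (‖Δ t‖ ^ p) * ENNReal.ofReal (w n) :=
            ENNReal.ofReal_mul (Real.rpow_nonneg (norm_nonneg _) _)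
    calc ∫⁻ t in Set.Ico (n : ℝ) ((n : ℝ) + 1), ENNReal.ofReal (‖Δ t‖ ^ p * (ν t) ^ p)
        ≤ ∫⁻ t in Set.Ico (n : ℝ) ((n : ℝ) + 1),
            ENNReal.ofReal (‖Δ t‖ ^ p) * ENNReal.ofReal (w n) := by
          apply lintegral_mono_ae
          exact (ae_restrict_iff' measurableSet_Ico).2 (Filter.Eventually.of_forall hpt)
      _ = (∫⁻ t in Set.Ico (n : ℝ) ((n : ℝ) + 1), ENNReal.ofReal (‖Δ t‖ ^ p))
            * ENNReal.ofReal (w n) :=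
          lintegral_mul_const'' _ (hN.ennreal_ofReal.restrict)
      _ ≤ (∫⁻ t in Set.Icc (n : ℝ) ((n : ℝ) + 1), ENNReal.ofReal (‖Δ t‖ ^ p))
            * ENNReal.ofReal (w n) :=
          mul_le_mul_left (lintegral_mono_set Set.Ico_subset_Icc_self) _
      _ = ENNReal.ofReal (∫ t in Set.Icc (n : ℝ) ((n : ℝ) + 1), ‖Δ t‖ ^ p)
            * ENNReal.ofReal (w n) := by
          rw [ofReal_integral_eq_lintegral_ofReal (hΔint (n : ℝ) ((n : ℝ) + 1))
            (Filter.Eventually.of_forall fun s => Real.rpow_nonneg (norm_nonneg _) _)]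
      _ ≤ ENNReal.ofReal (ε' ^ p) * ENNReal.ofReal (w n) :=
          mul_le_mul_left (ENNReal.ofReal_le_ofReal (hIb n)) _
  -- arithmetic: ε'^p * C ≤ ε^p
  have hεεp : ε' ^ p * C ≤ ε ^ p := by
    have hx : ((C + 1) ^ (-(1/p))) ^ p = (C + 1)⁻¹ := by
      rw [← Real.rpow_mul hC1.le]
      have hne : -(1/p) * p = -1 := by field_simp
      rw [hne, Real.rpow_neg_one]
    have h1 : ε' ^ p = ε ^ p * (C + 1)⁻¹ := by
      rw [hε'_def, Real.mul_rpow hε.le (Real.rpow_nonneg hC1.le _), hx]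
    rw [h1]
    have h2 : C / (C + 1) ≤ 1 := by rw [div_le_one hC1]; linarith
    have h3 : ε ^ p * (C + 1)⁻¹ * C = ε ^ p * (C / (C + 1)) := by ring
    rw [h3]
    calc ε ^ p * (C / (C + 1)) ≤ ε ^ p * 1 :=
          mul_le_mul_of_nonneg_left h2 (Real.rpow_nonneg hε.le p)
      _ = ε ^ p := mul_one _
  -- total lintegral bound
  have key : (∫⁻ t, ENNReal.ofReal (‖Δ t‖ ^ p * (ν t) ^ p)) ≤ ENNReal.ofReal (ε ^ p) := by
    have hdecomp : (∫⁻ t, ENNReal.ofReal (‖Δ t‖ ^ p * (ν t) ^ p))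
        = ∑' n : ℤ, ∫⁻ t in Set.Ico (n : ℝ) ((n : ℝ) + 1),
            ENNReal.ofReal (‖Δ t‖ ^ p * (ν t) ^ p) := by
      rw [← lintegral_iUnion (fun n : ℤ => measurableSet_Ico)
        (Set.pairwise_disjoint_Ico_intCast ℝ), iUnion_Ico_intCast ℝ, Measure.restrict_univ]
    rw [hdecomp]
    calc ∑' n : ℤ, ∫⁻ t in Set.Ico (n : ℝ) ((n : ℝ) + 1),
           ENNReal.ofReal (‖Δ t‖ ^ p * (ν t) ^ p)
        ≤ ∑' n : ℤ, ENNReal.ofReal (ε' ^ p) * ENNReal.ofReal (w n) :=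
          ENNReal.tsum_le_tsum hI
      _ = ENNReal.ofReal (ε' ^ p) * ∑' n : ℤ, ENNReal.ofReal (w n) := ENNReal.tsum_mul_left
      _ = ENNReal.ofReal (ε' ^ p) * ENNReal.ofReal C := by
          rw [← ENNReal.ofReal_tsum_of_nonneg hw_nonneg hw_sum]
      _ = ENNReal.ofReal (ε' ^ p * C) :=
          (ENNReal.ofReal_mul (Real.rpow_nonneg hε'pos.le _)).symm
      _ ≤ ENNReal.ofReal (ε ^ p) := ENNReal.ofReal_le_ofReal hεεp
  have hInt : Integrable (fun t => ‖Δ t‖ ^ p * (ν t) ^ p) volume :=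
    ⟨hHm, (hasFiniteIntegral_iff_ofReal hH_nonneg).2 (lt_of_le_of_lt key ENNReal.ofReal_lt_top)⟩
  refine ⟨τ, hτ, hInt, ?_⟩
  show (∫ t, ‖Δ t‖ ^ p * (ν t) ^ p) ^ (1/p) ≤ ε
  have hieq : (∫ t, ‖Δ t‖ ^ p * (ν t) ^ p)
      = (∫⁻ t, ENNReal.ofReal (‖Δ t‖ ^ p * (ν t) ^ p)).toReal :=
    integral_eq_lintegral_of_nonneg_ae hH_nonneg hHm
  have hile : (∫ t, ‖Δ t‖ ^ p * (ν t) ^ p) ≤ ε ^ p := by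
    rw [hieq]
    have h2 := ENNReal.toReal_mono ENNReal.ofReal_ne_top key
    rwa [ENNReal.toReal_ofReal (Real.rpow_nonneg hε.le _)] at h2
  have hi0 : 0 ≤ ∫ t, ‖Δ t‖ ^ p * (ν t) ^ p := by
    rw [hieq]; exact ENNReal.toReal_nonneg
  calc (∫ t, ‖Δ t‖ ^ p * (ν t) ^ p) ^ (1/p)
      ≤ (ε ^ p) ^ (1/p) := Real.rpow_le_rpow hi0 hile (by positivity)
    _ = ε := by rw [one_div, Real.rpow_rpow_inv hε.le (ne_of_gt hp0)]
end
end
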